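/- arXiv:2303.06300 — 3 statements merged into one kernel-verified Lean document; each statement's English description precedes it below -/
import Mathlib

section
/- The total number of blocks over all non-crossing partitions of [r] equals binom(2r−1, r) for r ≥ 1. -/
/-- `l` is a restricted growth sequence (canonical sequential form of a set
partition): it starts with 1, all letters are ≥ 1, and each letter is at most
one more than the maximum of the preceding prefix. -/
def IsRGS (l : List ℕ) : Prop :=
  l.getD 0 1 = 1 ∧ (∀ x ∈ l, 1 ≤ x) ∧
  ∀ i, i + 1 < l.length → l.getD (i + 1) 0 ≤ (l.take (i + 1)).foldr max 0 + 1

/-- `l` contains a (classical) occurrence of 1-2-1-2: a subsequence a,b,a,b with a < b. -/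
def Crossing (l : List ℕ) : Prop :=
  ∃ i j k m : ℕ, i < j ∧ j < k ∧ k < m ∧ m < l.length ∧
    l.getD i 0 = l.getD k 0 ∧ l.getD j 0 = l.getD m 0 ∧ l.getD i 0 < l.getD j 0

/-- `l` is the canonical sequential form of a non-crossing partition of [n]. -/
def NCseq (n : ℕ) (l : List ℕ) : Prop := l.length = n ∧ IsRGS l ∧ ¬ Crossing l

/-- Two lists of the same length are order-isomorphic. -/
def OrdIso (s t : List ℕ) : Prop :=
  s.length = t.length ∧ ∀ j k, j < s.length → k < s.length →
    (s.getD j 0 < s.getD k 0 ↔ t.getD j 0 < t.getD k 0)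

/-- The subword pattern `τ` occurs in `l` starting at position `i`. -/
def occAt (τ l : List ℕ) (i : ℕ) : Prop := OrdIso τ ((l.drop i).take τ.length)

/-- The number of occurrences of the subword pattern `τ` in `l`. -/
noncomputable def occCount (τ l : List ℕ) : ℕ := Nat.card {i : ℕ // occAt τ l i}

/-- The total number of occurrences of the subword pattern `τ` over all
members of NC_n, counted with multiplicity (as marked occurrences). -/
noncomputable def totalOcc (n : ℕ) (τ : List ℕ) : ℕ :=
  Nat.card {p : List ℕ × ℕ // NCseq n p.1 ∧ occAt τ p.1 p.2}



namespace NCaux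

def Mx (l : List ℕ) : ℕ := l.foldr max 0

lemma Mx_append (l : List ℕ) (x : ℕ) : Mx (l ++ [x]) = max (Mx l) x := by
  induction l with
  | nil => simp [Mx]
  | cons a t ih => simp only [Mx, List.cons_append, List.foldr_cons] at ih ⊢; rw [ih, max_assoc]

lemma le_Mx_of_mem {l : List ℕ} {y : ℕ} (h : y ∈ l) : y ≤ Mx l := by
  induction l with
  | nil => simp at h
  | cons a t ih =>
    rcases List.mem_cons.mp h with rfl | h
    · simp [Mx]
    · simp only [Mx, List.foldr_cons]
      exact le_trans (ih h) (le_max_right _ _)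

lemma Mx_le_of_forall {l : List ℕ} {c : ℕ} (h : ∀ y ∈ l, y ≤ c) : Mx l ≤ c := by
  induction l with
  | nil => simp [Mx]
  | cons a t ih =>
    simp only [Mx, List.foldr_cons]
    exact max_le (h a (by simp)) (ih fun y hy => h y (by simp [hy]))

lemma getD_mem {l : List ℕ} {i : ℕ} (h : i < l.length) : l.getD i 0 ∈ l := by
  rw [List.getD_eq_getElem _ _ h]; exact List.getElem_mem h

lemma Mx_take_le (l : List ℕ) (t : ℕ) : Mx (l.take t) ≤ Mx l :=
  Mx_le_of_forall fun y hy => le_Mx_of_mem (List.mem_of_mem_take hy)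

lemma take_succ_eq {l : List ℕ} {i : ℕ} (h : i < l.length) :
    l.take (i + 1) = l.take i ++ [l.getD i 0] := by
  rw [List.take_succ, List.getElem?_eq_getElem h, List.getD_eq_getElem _ _ h]
  rfl

lemma Mx_take_succ {l : List ℕ} {i : ℕ} (h : i < l.length) :
    Mx (l.take (i + 1)) = max (Mx (l.take i)) (l.getD i 0) := by
  rw [take_succ_eq h, Mx_append]

lemma head_one {l : List ℕ} (hR : IsRGS l) (h : 0 < l.length) : l.getD 0 0 = 1 := by
  have h1 := hR.1
  cases l with
  | nil => simp at h
  | cons a t => simpa using h1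

lemma rgs_getD_le_succ {l : List ℕ} (hR : IsRGS l) {t : ℕ} (ht : t < l.length) :
    l.getD t 0 ≤ Mx (l.take t) + 1 := by
  cases t with
  | zero => rw [head_one hR ht]; omega
  | succ i =>
    have := hR.2.2 i ht
    exact this

lemma rgs_Mx_take_le (l : List ℕ) (hR : IsRGS l) : ∀ t, Mx (l.take t) ≤ t := by
  intro t
  induction t with
  | zero => simp [Mx]
  | succ t ih =>
    rcases le_or_gt l.length t with hle | hlt
    · rw [List.take_of_length_le (by omega : l.length ≤ t + 1)]
      rw [List.take_of_length_le hle] at ih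
      omega
    · rw [Mx_take_succ hlt]
      have := rgs_getD_le_succ hR hlt
      omega

lemma rgs_Mx_le_len {l : List ℕ} (hR : IsRGS l) : Mx l ≤ l.length := by
  have := rgs_Mx_take_le l hR l.length
  rwa [List.take_length] at this

lemma rgs_surj {l : List ℕ} (hR : IsRGS l) :
    ∀ t, t ≤ l.length → ∀ v, 1 ≤ v → v ≤ Mx (l.take t) → ∃ i, i < t ∧ l.getD i 0 = v := by
  intro t
  induction t with
  | zero => intro _ v hv1 hv2; simp [Mx] at hv2; omega
  | succ t ih =>
    intro hlen v hv1 hv2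
    have hlt : t < l.length := by omega
    rw [Mx_take_succ hlt] at hv2
    rcases le_or_gt v (Mx (l.take t)) with hle | hgt
    · obtain ⟨i, hi, he⟩ := ih (by omega) v hv1 hle
      exact ⟨i, by omega, he⟩
    · have h1 : v ≤ l.getD t 0 := by omega
      have h2 := rgs_getD_le_succ hR hlt
      exact ⟨t, by omega, by omega⟩

/-- three-index pattern characterization of crossing for RGS sequences -/
lemma crossing_iff_p3 {l : List ℕ} (hR : IsRGS l) :
    Crossing l ↔ ∃ j k m, j < k ∧ k < m ∧ m < l.length ∧
      l.getD k 0 < l.getD j 0 ∧ l.getD j 0 = l.getD m 0 := by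
  constructor
  · rintro ⟨i, j, k, m, hij, hjk, hkm, hm, e1, e2, e3⟩
    exact ⟨j, k, m, hjk, hkm, hm, by omega, e2⟩
  · rintro ⟨j, k, m, hjk, hkm, hm, hlt, he⟩
    have hj : j < l.length := by omega
    have hk : k < l.length := by omega
    have ha1 : 1 ≤ l.getD k 0 := hR.2.1 _ (getD_mem hk)
    have hb : l.getD j 0 ≤ Mx (l.take j) + 1 := rgs_getD_le_succ hR hj
    have hsm : l.getD k 0 ≤ Mx (l.take j) := by omega
    obtain ⟨i, hi, hie⟩ := rgs_surj hR j (by omega) (l.getD k 0) ha1 hsm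
    exact ⟨i, j, k, m, hi, hjk, hkm, hm, by omega, he, by omega⟩

end NCaux

namespace NCaux
open Finset

/-- "no smaller letter after an occurrence of x" -/
def NBA (l : List ℕ) (x : ℕ) : Prop :=
  ∀ j k, j < k → k < l.length → l.getD j 0 = x → x ≤ l.getD k 0

instance (l : List ℕ) (x : ℕ) : Decidable (NBA l x) :=
  decidable_of_iff (∀ k, k < l.length → ∀ j, j < k → l.getD j 0 = x → x ≤ l.getD k 0)
    ⟨fun h j k hjk hk he => h k hk j hjk he, fun h k hk j hjk he => h j k hjk hk he⟩

def ExtF (l : List ℕ) : Finset ℕ := (Finset.Icc 1 (Mx l + 1)).filter (NBA l)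

lemma mem_ExtF {l : List ℕ} {x : ℕ} :
    x ∈ ExtF l ↔ (1 ≤ x ∧ x ≤ Mx l + 1) ∧ NBA l x := by
  simp [ExtF, Finset.mem_filter, Finset.mem_Icc, and_assoc]

-- getD lemmas for append
lemma getD_app_lt {l : List ℕ} {x : ℕ} {i : ℕ} (h : i < l.length) :
    (l ++ [x]).getD i 0 = l.getD i 0 := List.getD_append _ _ _ _ h

lemma getD_app_len {l : List ℕ} {x : ℕ} : (l ++ [x]).getD l.length 0 = x := by
  rw [List.getD_eq_getElem _ _ (by simp)]
  simp

lemma take_app {l : List ℕ} {x : ℕ} {n : ℕ} (h : n ≤ l.length) :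
    (l ++ [x]).take n = l.take n := List.take_append_of_le_length h

lemma rgs_append_iff {l : List ℕ} {x : ℕ} (hR : IsRGS l) :
    IsRGS (l ++ [x]) ↔ (1 ≤ x ∧ x ≤ Mx l + 1) := by
  constructor
  · intro hR'
    have hx1 : 1 ≤ x := hR'.2.1 x (by simp)
    refine ⟨hx1, ?_⟩
    rcases Nat.eq_zero_or_pos l.length with h0 | hpos
    · have : l = [] := List.length_eq_zero_iff.mp h0
      subst this
      have := head_one hR' (by simp)
      simp at this
      simp [this, Mx]
    · have h3 := hR'.2.2 (l.length - 1) (by simp; omega)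
      rw [show l.length - 1 + 1 = l.length by omega] at h3
      rw [getD_app_len, take_app (le_refl _), List.take_length] at h3
      exact h3
  · rintro ⟨hx1, hx2⟩
    refine ⟨?_, ?_, ?_⟩
    · rcases Nat.eq_zero_or_pos l.length with h0 | hpos
      · have : l = [] := List.length_eq_zero_iff.mp h0
        subst this
        simp [Mx] at hx2
        simpa using (by omega : x = 1)
      · have : (l ++ [x]).getD 0 1 = l.getD 0 1 := by
          cases l with
          | nil => simp at hpos
          | cons a t => simp
        rw [this]; exact hR.1
    · intro y hy
      rcases List.mem_append.mp hy with h | h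
      · exact hR.2.1 y h
      · simp at h; omega
    · intro i hi
      simp only [List.length_append, List.length_singleton] at hi
      rcases lt_or_eq_of_le (by omega : i + 1 ≤ l.length) with hlt | heq
      · rw [getD_app_lt hlt, take_app (by omega)]
        exact hR.2.2 i hlt
      · rw [heq, getD_app_len, take_app (le_refl _), List.take_length]
        exact hx2

lemma crossing_mono {l : List ℕ} {x : ℕ} (h : Crossing l) : Crossing (l ++ [x]) := by
  obtain ⟨i, j, k, m, hij, hjk, hkm, hm, e1, e2, e3⟩ := h
  refine ⟨i, j, k, m, hij, hjk, hkm, by simp; omega, ?_, ?_, ?_⟩ <;>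
    rw [getD_app_lt (by omega), getD_app_lt (by omega)] <;> assumption

lemma not_crossing_append {l : List ℕ} {x : ℕ} (hR : IsRGS l) (hR' : IsRGS (l ++ [x]))
    (hNC : ¬ Crossing l) : (¬ Crossing (l ++ [x])) ↔ NBA l x := by
  constructor
  · intro hNC' j k hjk hk he
    by_contra hcon
    apply hNC'
    rw [crossing_iff_p3 hR']
    refine ⟨j, k, l.length, hjk, hk, by simp, ?_, ?_⟩
    · rw [getD_app_lt hk, getD_app_lt (show j < l.length by omega), he]; omega
    · rw [getD_app_lt (by omega), getD_app_len, he]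
  · intro hnba hcr
    rw [crossing_iff_p3 hR'] at hcr
    obtain ⟨j, k, m, hjk, hkm, hm, hlt, he⟩ := hcr
    simp only [List.length_append, List.length_singleton] at hm
    rcases lt_or_eq_of_le (by omega : m + 1 ≤ l.length + 1) with hmlt | hmeq
    · apply hNC
      rw [crossing_iff_p3 hR]
      refine ⟨j, k, m, hjk, hkm, by omega, ?_, ?_⟩
      · rwa [getD_app_lt (by omega), getD_app_lt (by omega)] at hlt
      · rwa [getD_app_lt (by omega), getD_app_lt (by omega)] at he
    · have hmlen : m = l.length := by omega
      subst hmlen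
      rw [getD_app_len] at he
      rw [getD_app_lt (by omega)] at he hlt
      rw [getD_app_lt (by omega)] at hlt
      have := hnba j k hjk (by omega) he
      omega

lemma ext_iff {l : List ℕ} {x : ℕ} (hR : IsRGS l) (hNC : ¬ Crossing l) :
    (IsRGS (l ++ [x]) ∧ ¬ Crossing (l ++ [x])) ↔ x ∈ ExtF l := by
  constructor
  · rintro ⟨hR', hNC'⟩
    rw [mem_ExtF]
    exact ⟨(rgs_append_iff hR).mp hR', (not_crossing_append hR hR' hNC).mp hNC'⟩
  · intro hx
    rw [mem_ExtF] at hx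
    have hR' := (rgs_append_iff hR).mpr hx.1
    exact ⟨hR', (not_crossing_append hR hR' hNC).mpr hx.2⟩

lemma rgs_dropLast {l : List ℕ} {x : ℕ} (hR' : IsRGS (l ++ [x])) : IsRGS l := by
  refine ⟨?_, ?_, ?_⟩
  · cases l with
    | nil => rfl
    | cons a t => simpa using hR'.1
  · intro y hy
    exact hR'.2.1 y (by simp [hy])
  · intro i hi
    have := hR'.2.2 i (by simp; omega)
    rwa [getD_app_lt (by omega), take_app (by omega)] at this

lemma not_crossing_dropLast {l : List ℕ} {x : ℕ} (hNC' : ¬ Crossing (l ++ [x])) :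
    ¬ Crossing l := fun h => hNC' (crossing_mono h)

def NCF : ℕ → Finset (List ℕ)
  | 0 => {[]}
  | n + 1 => (NCF n).biUnion fun l => (ExtF l).image fun x => l ++ [x]

lemma ncseq_zero {l : List ℕ} : NCseq 0 l ↔ l = [] := by
  constructor
  · intro h; exact List.length_eq_zero_iff.mp h.1
  · rintro rfl
    refine ⟨rfl, ⟨rfl, by simp, by simp⟩, ?_⟩
    rintro ⟨i, j, k, m, _, _, _, hm, _⟩
    simp at hm

lemma mem_NCF : ∀ {n : ℕ} {l : List ℕ}, l ∈ NCF n ↔ NCseq n l := by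
  intro n
  induction n with
  | zero => intro l; simp [NCF, ncseq_zero]
  | succ n ih =>
    intro l
    constructor
    · intro hl
      simp only [NCF, Finset.mem_biUnion, Finset.mem_image] at hl
      obtain ⟨a, ha, x, hx, rfl⟩ := hl
      have hA : NCseq n a := ih.mp ha
      have := (ext_iff hA.2.1 hA.2.2).mpr hx
      exact ⟨by simp [hA.1], this.1, this.2⟩
    · intro h
      have hne : l ≠ [] := by
        intro h0; rw [h0] at h; simpa using h.1
      obtain ⟨a, x, rfl⟩ : ∃ a x, l = a ++ [x] := by
        refine ⟨l.dropLast, l.getLast hne, ?_⟩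
        rw [List.dropLast_append_getLast hne]
      have hRa : IsRGS a := rgs_dropLast h.2.1
      have hNCa : ¬ Crossing a := not_crossing_dropLast h.2.2
      have hlen : a.length = n := by
        have := h.1; simp at this; omega
      have hx : x ∈ ExtF a := (ext_iff hRa hNCa).mp ⟨h.2.1, h.2.2⟩
      simp only [NCF, Finset.mem_biUnion, Finset.mem_image]
      exact ⟨a, ih.mpr ⟨hlen, hRa, hNCa⟩, x, hx, rfl⟩

end NCaux

namespace NCaux
open Finset

lemma top_mem_ExtF {l : List ℕ} : Mx l + 1 ∈ ExtF l := by
  rw [mem_ExtF]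
  refine ⟨⟨by omega, le_refl _⟩, ?_⟩
  intro j k hjk hk he
  have : l.getD j 0 ≤ Mx l := le_Mx_of_mem (getD_mem (by omega))
  omega

lemma one_mem_ExtF {l : List ℕ} (hR : IsRGS l) : 1 ∈ ExtF l := by
  rw [mem_ExtF]
  exact ⟨⟨le_refl _, by omega⟩, fun j k hjk hk he => hR.2.1 _ (getD_mem hk)⟩

lemma Mx_pos {l : List ℕ} (hR : IsRGS l) (hne : l ≠ []) : 1 ≤ Mx l := by
  have h0 : 0 < l.length := List.length_pos_iff.mpr hne
  have := head_one hR h0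
  have := le_Mx_of_mem (getD_mem h0)
  omega

lemma ExtF_card_ge_two {l : List ℕ} (hR : IsRGS l) (hne : l ≠ []) : 2 ≤ (ExtF l).card := by
  have h1 : ({1, Mx l + 1} : Finset ℕ) ⊆ ExtF l := by
    intro y hy
    rcases Finset.mem_insert.mp hy with rfl | hy
    · exact one_mem_ExtF hR
    · rw [Finset.mem_singleton.mp hy]; exact top_mem_ExtF
  have h2 : ({1, Mx l + 1} : Finset ℕ).card = 2 := by
    rw [Finset.card_insert_of_notMem (by simp; have := Mx_pos hR hne; omega)]
    simp
  calc 2 = ({1, Mx l + 1} : Finset ℕ).card := h2.symm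
    _ ≤ _ := Finset.card_le_card h1

lemma ExtF_card_le {l : List ℕ} : (ExtF l).card ≤ Mx l + 1 := by
  calc (ExtF l).card ≤ (Finset.Icc 1 (Mx l + 1)).card :=
        Finset.card_le_card (Finset.filter_subset _ _)
    _ = Mx l + 1 := by rw [Nat.card_Icc]; omega

lemma mem_ExtF_le_top {l : List ℕ} {x : ℕ} (hx : x ∈ ExtF l) : x ≤ Mx l + 1 :=
  (mem_ExtF.mp hx).1.2

lemma Mx_append_top (l : List ℕ) : Mx (l ++ [Mx l + 1]) = Mx l + 1 := by
  rw [Mx_append]; omega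

lemma Mx_append_low {l : List ℕ} {x : ℕ} (h : x ≤ Mx l) : Mx (l ++ [x]) = Mx l := by
  rw [Mx_append]; omega

lemma ExtF_append_top {l : List ℕ} : ExtF (l ++ [Mx l + 1]) = insert (Mx l + 2) (ExtF l) := by
  ext y
  rw [Finset.mem_insert, mem_ExtF, mem_ExtF, Mx_append_top]
  constructor
  · rintro ⟨⟨hy1, hy2⟩, hnba⟩
    rcases eq_or_lt_of_le hy2 with heq | hlt
    · left; omega
    · right
      refine ⟨⟨hy1, by omega⟩, ?_⟩
      intro j k hjk hk he
      have := hnba j k hjk (by simp; omega) (by rwa [getD_app_lt (by omega)])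
      rwa [getD_app_lt (by omega)] at this
  · rintro (rfl | ⟨⟨hy1, hy2⟩, hnba⟩)
    · refine ⟨⟨by omega, le_refl _⟩, ?_⟩
      intro j k hjk hk he
      simp only [List.length_append, List.length_singleton] at hk
      rcases Nat.lt_or_ge j l.length with hj | hj
      · rw [getD_app_lt hj] at he
        have := le_Mx_of_mem (getD_mem hj)
        omega
      · omega
    · refine ⟨⟨hy1, by omega⟩, ?_⟩
      intro j k hjk hk he
      simp only [List.length_append, List.length_singleton] at hk
      have hj : j < l.length := by omega
      rw [getD_app_lt hj] at he
      rcases lt_or_eq_of_le (by omega : k + 1 ≤ l.length + 1) with hk' | hk'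
      · rw [getD_app_lt (by omega)]
        exact hnba j k hjk (by omega) he
      · rw [show k = l.length by omega, getD_app_len]
        omega

lemma ExtF_append_low {l : List ℕ} {x : ℕ} (hR : IsRGS l) (hx : x ∈ ExtF l)
    (hxle : x ≤ Mx l) :
    ExtF (l ++ [x]) = insert (Mx l + 1) ((ExtF l).filter (· ≤ x)) := by
  have hMx' : Mx (l ++ [x]) = Mx l := Mx_append_low hxle
  have hnbax : NBA l x := (mem_ExtF.mp hx).2
  ext y
  rw [Finset.mem_insert, Finset.mem_filter, mem_ExtF, mem_ExtF, hMx']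
  constructor
  · rintro ⟨⟨hy1, hy2⟩, hnba⟩
    rcases eq_or_lt_of_le hy2 with heq | hlt
    · left; omega
    · right
      have hnbal : NBA l y := by
        intro j k hjk hk he
        have := hnba j k hjk (by simp; omega) (by rwa [getD_app_lt (by omega)])
        rwa [getD_app_lt (by omega)] at this
      refine ⟨⟨⟨hy1, by omega⟩, hnbal⟩, ?_⟩
      by_contra hcon
      have hyM : y ≤ Mx l := by omega
      have hylen : Mx l ≤ l.length := rgs_Mx_le_len hR
      obtain ⟨j, hj, hje⟩ := rgs_surj hR l.length (le_refl _) y hy1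
        (by rwa [List.take_length])
      have := hnba j l.length hj (by simp) (by rwa [getD_app_lt hj])
      rw [getD_app_len] at this
      omega
  · rintro (rfl | ⟨⟨⟨hy1, hy2⟩, hnbal⟩, hyx⟩)
    · refine ⟨⟨by omega, le_refl _⟩, ?_⟩
      intro j k hjk hk he
      simp only [List.length_append, List.length_singleton] at hk
      rcases Nat.lt_or_ge j l.length with hj | hj
      · rw [getD_app_lt hj] at he
        have := le_Mx_of_mem (getD_mem hj)
        omega
      · rw [show j = l.length by omega, getD_app_len] at he
        omega
    · refine ⟨⟨hy1, by omega⟩, ?_⟩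
      intro j k hjk hk he
      simp only [List.length_append, List.length_singleton] at hk
      have hj : j < l.length := by omega
      rw [getD_app_lt hj] at he
      rcases lt_or_eq_of_le (by omega : k + 1 ≤ l.length + 1) with hk' | hk'
      · rw [getD_app_lt (by omega)]
        exact hnbal j k hjk (by omega) he
      · rw [show k = l.length by omega, getD_app_len]
        omega

lemma H_append_top {l : List ℕ} : (ExtF (l ++ [Mx l + 1])).card = (ExtF l).card + 1 := by
  rw [ExtF_append_top, Finset.card_insert_of_notMem]
  intro h
  have := mem_ExtF_le_top h
  omega

lemma H_append_low {l : List ℕ} {x : ℕ} (hR : IsRGS l) (hx : x ∈ ExtF l)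
    (hxle : x ≤ Mx l) :
    (ExtF (l ++ [x])).card = ((ExtF l).filter (· ≤ x)).card + 1 := by
  rw [ExtF_append_low hR hx hxle, Finset.card_insert_of_notMem]
  intro h
  have := (Finset.mem_filter.mp h).2
  simp at this
  omega

end NCaux

namespace NCaux
open Finset

/-- rank of x within S: number of elements ≤ x -/
def rk (S : Finset ℕ) (x : ℕ) : ℕ := (S.filter (· ≤ x)).card

lemma rk_lt_rk {S : Finset ℕ} {x y : ℕ} (hy : y ∈ S) (hxy : x < y) : rk S x < rk S y := by
  apply Finset.card_lt_card
  constructor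
  · intro z hz
    rw [Finset.mem_filter] at hz ⊢
    exact ⟨hz.1, by omega⟩
  · intro hsub
    have := hsub (Finset.mem_filter.mpr ⟨hy, by simp⟩)
    rw [Finset.mem_filter] at this
    omega

lemma rk_injOn {S : Finset ℕ} {T : Finset ℕ} (hT : T ⊆ S) :
    ∀ x ∈ T, ∀ y ∈ T, rk S x = rk S y → x = y := by
  intro x hx y hy he
  by_contra hne
  rcases Nat.lt_or_ge x y with h | h
  · have := rk_lt_rk (hT hy) h; omega
  · have : y < x := by omega
    have := rk_lt_rk (hT hx) this; omega

/-- key per-list decomposition of a sum over extensions -/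
lemma step_sum {l : List ℕ} (hR : IsRGS l) (F : ℕ → ℕ → ℤ) :
    ∑ x ∈ ExtF l, F ((ExtF (l ++ [x])).card) (Mx (l ++ [x])) =
      F ((ExtF l).card + 1) (Mx l + 1) +
        ∑ h ∈ Finset.Icc 2 ((ExtF l).card), F h (Mx l) := by
  set S := ExtF l with hS
  set T := Mx l + 1 with hT
  have hTS : T ∈ S := top_mem_ExtF
  rw [← Finset.add_sum_erase _ _ hTS]
  congr 1
  · rw [H_append_top, Mx_append_top]
  · -- terms over S.erase T
    have hterm : ∀ x ∈ S.erase T, F ((ExtF (l ++ [x])).card) (Mx (l ++ [x]))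
        = F (rk S x + 1) (Mx l) := by
      intro x hx
      have hxS : x ∈ S := Finset.mem_of_mem_erase hx
      have hxle : x ≤ Mx l := by
        have h1 := mem_ExtF_le_top (hS ▸ hxS)
        have h2 := Finset.ne_of_mem_erase hx
        omega
      rw [H_append_low hR (hS ▸ hxS) hxle, Mx_append_low hxle]
      rfl
    rw [Finset.sum_congr rfl hterm]
    -- reindex by rank
    have hinj : ∀ x ∈ S.erase T, ∀ y ∈ S.erase T, rk S x = rk S y → x = y :=
      rk_injOn (Finset.erase_subset _ _)
    rw [← Finset.sum_image (f := fun t => F (t + 1) (Mx l)) hinj]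
    have himg : (S.erase T).image (rk S) = Finset.Icc 1 (S.card - 1) := by
      apply Finset.eq_of_subset_of_card_le
      · intro t ht
        rw [Finset.mem_image] at ht
        obtain ⟨x, hx, rfl⟩ := ht
        have hxS : x ∈ S := Finset.mem_of_mem_erase hx
        rw [Finset.mem_Icc]
        constructor
        · have hm : x ∈ S.filter (· ≤ x) := Finset.mem_filter.mpr ⟨hxS, by simp⟩
          exact Finset.card_pos.mpr ⟨x, hm⟩
        · have hsub : S.filter (· ≤ x) ⊆ S.erase T := by
            intro z hz
            rw [Finset.mem_filter] at hz
            rw [Finset.mem_erase]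
            refine ⟨?_, hz.1⟩
            have hzx := hz.2
            have hxle : x < T := by
              have h1 := mem_ExtF_le_top (hS ▸ hxS)
              have h2 := Finset.ne_of_mem_erase hx
              omega
            omega
          have := Finset.card_le_card hsub
          rw [Finset.card_erase_of_mem hTS] at this
          exact this
      · rw [Nat.card_Icc, Finset.card_image_of_injOn]
        · rw [Finset.card_erase_of_mem hTS]
          omega
        · intro x hx y hy
          exact rk_injOn (Finset.erase_subset _ _) x (Finset.mem_coe.mp hx) y
            (Finset.mem_coe.mp hy)
    rw [himg]
    have hcard : 1 ≤ S.card := Finset.card_pos.mpr ⟨T, hTS⟩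
    have : Finset.Icc 2 S.card = (Finset.Icc 1 (S.card - 1)).image (fun t => t + 1) := by
      rw [Finset.image_add_right_Icc]
      congr 1
      omega
    rw [this, Finset.sum_image (by intro x _ y _ h; simp only at h; omega)]

/-- unfolding a sum over NCF (r+1) -/
lemma sum_NCF_succ (r : ℕ) (G : List ℕ → ℤ) :
    ∑ l' ∈ NCF (r + 1), G l' = ∑ l ∈ NCF r, ∑ x ∈ ExtF l, G (l ++ [x]) := by
  show ∑ l' ∈ (NCF r).biUnion _, G l' = _
  rw [Finset.sum_biUnion]
  · apply Finset.sum_congr rfl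
    intro l _
    rw [Finset.sum_image]
    intro x _ y _ h
    simpa using (List.append_inj h rfl).2
  · intro a _ b _ hab
    simp only [Function.onFun]
    rw [Finset.disjoint_left]
    intro c hca hcb
    rw [Finset.mem_image] at hca hcb
    obtain ⟨x, _, rfl⟩ := hca
    obtain ⟨y, _, he⟩ := hcb
    have hlen : a.length = b.length := by
      have h := congrArg List.length he
      simp at h
      omega
    exact hab (List.append_inj he.symm hlen).1

end NCaux

namespace NCaux
open Finset

def fA (r h : ℕ) : ℤ := (Nat.choose (2*r - h) (r-1) : ℤ) - Nat.choose (2*r - h) r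
def fB (r h : ℕ) : ℤ := ((h : ℤ) - 1) * Nat.choose (2*r - 1 - h) (r - 2)

lemma fA_one (r : ℕ) (hr : 1 ≤ r) : fA r 1 = 0 := by
  unfold fA
  have h1 : 2*r - 1 - (r - 1) = r := by omega
  have := Nat.choose_symm (show r - 1 ≤ 2*r - 1 by omega) (n := 2*r - 1)
  rw [h1] at this
  rw [this]
  ring

lemma fB_one (r : ℕ) : fB r 1 = 0 := by unfold fB; simp

lemma Icc_insert_left {a b : ℕ} (h : a ≤ b) :
    Finset.Icc a b = insert a (Finset.Icc (a+1) b) := by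
  ext t
  simp only [Finset.mem_Icc, Finset.mem_insert]
  omega

/-- suffix sums of fA -/
lemma sumA (r : ℕ) (hr : 1 ≤ r) : ∀ d h, h + d = r + 2 → 2 ≤ h →
    ∑ H ∈ Finset.Icc h (r+1), fA r H =
      (Nat.choose (2*r + 1 - h) r : ℤ) - Nat.choose (2*r + 1 - h) (r+1) := by
  intro d
  induction d with
  | zero =>
    intro h hh _
    have : h = r + 2 := by omega
    subst this
    rw [Finset.Icc_eq_empty (by omega)]
    have e1 : 2*r + 1 - (r + 2) = r - 1 := by omega
    rw [e1, Nat.choose_eq_zero_of_lt (by omega), Nat.choose_eq_zero_of_lt (by omega)]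
    simp
  | succ d ih =>
    intro h hh h2
    have hhr : h ≤ r + 1 := by omega
    rw [Icc_insert_left hhr, Finset.sum_insert (by simp)]
    rw [ih (h+1) (by omega) (by omega)]
    have e0 : 2*r + 1 - (h+1) = 2*r - h := by omega
    rw [e0]
    obtain ⟨m, hm⟩ : ∃ m, 2*r - h = m := ⟨_, rfl⟩
    have e1 : 2*r + 1 - h = m + 1 := by omega
    obtain ⟨q, hq⟩ : ∃ q, r = q + 1 := ⟨r - 1, by omega⟩
    unfold fA
    rw [e1, hm, hq]
    have p1 : Nat.choose (m+1) (q+1) = Nat.choose m q + Nat.choose m (q+1) :=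
      Nat.choose_succ_succ m q
    have p2 : Nat.choose (m+1) (q+2) = Nat.choose m (q+1) + Nat.choose m (q+2) :=
      Nat.choose_succ_succ m (q+1)
    have eq1 : q + 1 - 1 = q := by omega
    have eq2 : q + 1 + 1 = q + 2 := by omega
    rw [eq1, eq2, p1, p2]
    push_cast
    ring

/-- suffix sums of fB -/
lemma sumB (r : ℕ) (hr : 1 ≤ r) : ∀ d h, h + d = r + 1 → 2 ≤ h →
    ∑ H ∈ Finset.Icc h (r+1), fB r H =
      (Nat.choose (2*r - h) r : ℤ) + ((h:ℤ) - 1) * Nat.choose (2*r - h) (r-1) := by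
  intro d
  induction d with
  | zero =>
    intro h hh h2
    have : h = r + 1 := by omega
    subst this
    rw [show Finset.Icc (r+1) (r+1) = {r+1} by rw [Finset.Icc_self], Finset.sum_singleton]
    unfold fB
    have e1 : 2*r - 1 - (r+1) = r - 2 := by omega
    have e2 : 2*r - (r+1) = r - 1 := by omega
    rw [e1, e2, Nat.choose_self, Nat.choose_eq_zero_of_lt (by omega), Nat.choose_self]
    push_cast
    ring
  | succ d ih =>
    intro h hh h2
    have hr2 : 2 ≤ r := by omega
    have hhr : h ≤ r := by omega
    rw [Icc_insert_left (by omega), Finset.sum_insert (by simp)]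
    rw [ih (h+1) (by omega) (by omega)]
    unfold fB
    obtain ⟨m, hm⟩ : ∃ m, 2*r - h - 1 = m := ⟨_, rfl⟩
    have e1 : 2*r - 1 - h = m := by omega
    have e2 : 2*r - h = m + 1 := by omega
    have e3 : 2*r - (h+1) = m := by omega
    obtain ⟨q, hq⟩ : ∃ q, r = q + 2 := ⟨r - 2, by omega⟩
    rw [e1, e2, e3, hq]
    have eq1 : q + 2 - 1 = q + 1 := by omega
    have eq2 : q + 2 - 2 = q := by omega
    rw [eq1, eq2]
    have p1 : Nat.choose (m+1) (q+2) = Nat.choose m (q+1) + Nat.choose m (q+2) :=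
      Nat.choose_succ_succ m (q+1)
    have p2 : Nat.choose (m+1) (q+1) = Nat.choose m q + Nat.choose m (q+1) :=
      Nat.choose_succ_succ m q
    rw [p1, p2]
    push_cast
    ring

lemma recA (r h : ℕ) (hr : 1 ≤ r) (h2 : 2 ≤ h) (hh : h ≤ r + 2) :
    fA r (h-1) + ((Nat.choose (2*r + 1 - h) r : ℤ) - Nat.choose (2*r + 1 - h) (r+1)) =
      fA (r+1) h := by
  unfold fA
  obtain ⟨m, hm⟩ : ∃ m, 2*r + 1 - h = m := ⟨_, rfl⟩
  have e1 : 2*r - (h-1) = m := by omega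
  have e2 : 2*(r+1) - h = m + 1 := by omega
  rw [e1, e2, hm]
  obtain ⟨q, hq⟩ : ∃ q, r = q + 1 := ⟨r - 1, by omega⟩
  subst hq
  have eq1 : q + 1 - 1 = q := by omega
  rw [eq1]
  have p1 : Nat.choose (m+1) (q+1) = Nat.choose m q + Nat.choose m (q+1) :=
    Nat.choose_succ_succ m q
  have p2 : Nat.choose (m+1) (q+2) = Nat.choose m (q+1) + Nat.choose m (q+2) :=
    Nat.choose_succ_succ m (q+1)
  rw [show q + 1 + 1 = q + 2 by omega, show q + 2 - 1 = q + 1 by omega, p1, p2]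
  push_cast
  ring

lemma recB1 (r h : ℕ) (hr : 1 ≤ r) (h2 : 2 ≤ h) (hh : h ≤ r + 1) :
    fB r (h-1) + fA r (h-1) +
      ((Nat.choose (2*r - h) r : ℤ) + ((h:ℤ) - 1) * Nat.choose (2*r - h) (r-1)) =
      fB (r+1) h := by
  rcases Nat.lt_or_ge r 2 with hr1 | hr2
  · have : r = 1 := by omega
    subst this
    interval_cases h
    · norm_num [fA, fB]
  · unfold fA fB
    obtain ⟨m, hm⟩ : ∃ m, 2*r - h = m := ⟨_, rfl⟩
    have e1 : 2*r - 1 - (h-1) = m := by omega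
    have e2 : 2*r - (h-1) = m + 1 := by omega
    have e3 : 2*(r+1) - 1 - h = m + 1 := by omega
    rw [e1, e2, e3, hm]
    obtain ⟨q, hq⟩ : ∃ q, r = q + 2 := ⟨r - 2, by omega⟩
    subst hq
    have eq1 : q + 2 - 1 = q + 1 := by omega
    have eq2 : q + 2 - 2 = q := by omega
    have eq3 : q + 2 + 1 - 2 = q + 1 := by omega
    rw [eq1, eq2, eq3]
    have p1 : Nat.choose (m+1) (q+1) = Nat.choose m q + Nat.choose m (q+1) :=
      Nat.choose_succ_succ m q
    have p2 : Nat.choose (m+1) (q+2) = Nat.choose m (q+1) + Nat.choose m (q+2) :=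
      Nat.choose_succ_succ m (q+1)
    rw [p1, p2]
    have hcast : ((h - 1 : ℕ) : ℤ) = (h : ℤ) - 1 := by
      have : 1 ≤ h := by omega
      push_cast [this]
      ring
    rw [hcast]
    push_cast
    ring

lemma recB2 (r : ℕ) (hr : 1 ≤ r) :
    fB r (r + 1) + fA r (r + 1) = fB (r+1) (r+2) := by
  unfold fA fB
  have e1 : 2*r - 1 - (r+1) = r - 2 := by omega
  have e2 : 2*r - (r+1) = r - 1 := by omega
  have e3 : 2*(r+1) - 1 - (r+2) = r - 1 := by omega
  have e4 : r + 1 - 2 = r - 1 := by omega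
  rw [e1, e2, e3, e4, Nat.choose_self, Nat.choose_self,
    Nat.choose_eq_zero_of_lt (show r - 1 < r by omega)]
  push_cast
  ring

lemma final_identity (r : ℕ) (hr : 1 ≤ r) :
    (Nat.choose (2*r - 2) r : ℤ) + ((2:ℤ) - 1) * Nat.choose (2*r - 2) (r-1) =
      Nat.choose (2*r - 1) r := by
  obtain ⟨m, hm⟩ : ∃ m, 2*r - 2 = m := ⟨_, rfl⟩
  have e1 : 2*r - 1 = m + 1 := by omega
  obtain ⟨q, hq⟩ : ∃ q, r = q + 1 := ⟨r - 1, by omega⟩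
  rw [e1, hm, hq]
  have eq1 : q + 1 - 1 = q := by omega
  rw [eq1, Nat.choose_succ_succ m q]
  push_cast
  ring

end NCaux

namespace NCaux
open Finset

lemma NCF_ne_nil {r : ℕ} {l : List ℕ} (hr : 1 ≤ r) (hl : l ∈ NCF r) : l ≠ [] := by
  intro h0
  have := (mem_NCF.mp hl).1
  rw [h0] at this
  simp at this
  omega

lemma NCF_card_lb {r : ℕ} {l : List ℕ} (hr : 1 ≤ r) (hl : l ∈ NCF r) :
    2 ≤ (ExtF l).card :=
  ExtF_card_ge_two (mem_NCF.mp hl).2.1 (NCF_ne_nil hr hl)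

lemma NCF_Mx_le {r : ℕ} {l : List ℕ} (hl : l ∈ NCF r) : Mx l ≤ r := by
  have hs := mem_NCF.mp hl
  have h1 := rgs_Mx_le_len hs.2.1
  have h2 := hs.1
  omega

lemma NCF_card_ub {r : ℕ} {l : List ℕ} (hl : l ∈ NCF r) : (ExtF l).card ≤ r + 1 := by
  have h1 := ExtF_card_le (l := l)
  have h2 := NCF_Mx_le hl
  omega

lemma step_count (r h : ℕ) (hr : 1 ≤ r) (h2 : 2 ≤ h) (W : ℕ → ℤ) :
    ∑ l' ∈ (NCF (r+1)).filter (fun l' => (ExtF l').card = h), W (Mx l') =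
      (∑ l ∈ (NCF r).filter (fun l => (ExtF l).card = h - 1), W (Mx l + 1)) +
      ∑ h' ∈ Finset.Icc h (r+1),
        ∑ l ∈ (NCF r).filter (fun l => (ExtF l).card = h'), W (Mx l) := by
  rw [Finset.sum_filter]
  rw [sum_NCF_succ r (fun l' => if (ExtF l').card = h then W (Mx l') else 0)]
  have hstep : ∀ l ∈ NCF r,
      (∑ x ∈ ExtF l, if (ExtF (l ++ [x])).card = h then W (Mx (l ++ [x])) else 0) =
        (if (ExtF l).card = h - 1 then W (Mx l + 1) else 0) +
          (if h ≤ (ExtF l).card then W (Mx l) else 0) := by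
    intro l hl
    have hR : IsRGS l := (mem_NCF.mp hl).2.1
    rw [step_sum hR (fun hh mm => if hh = h then W mm else 0)]
    congr 1
    · by_cases hc : (ExtF l).card + 1 = h
      · rw [if_pos hc, if_pos (by omega)]
      · rw [if_neg hc, if_neg (by omega)]
    · rw [Finset.sum_ite_eq' (Finset.Icc 2 ((ExtF l).card)) h (fun _ => W (Mx l))]
      by_cases hc : h ≤ (ExtF l).card
      · rw [if_pos (Finset.mem_Icc.mpr ⟨h2, hc⟩), if_pos hc]
      · rw [if_neg (by rw [Finset.mem_Icc]; omega), if_neg hc]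
  rw [Finset.sum_congr rfl hstep, Finset.sum_add_distrib]
  congr 1
  · rw [Finset.sum_filter]
  · have hmaps : ∀ l ∈ NCF r, (ExtF l).card ∈ Finset.Icc 1 (r+1) := by
      intro l hl
      rw [Finset.mem_Icc]
      exact ⟨by have := NCF_card_lb hr hl; omega, NCF_card_ub hl⟩
    rw [← Finset.sum_fiberwise_of_maps_to hmaps
      (fun l => if h ≤ (ExtF l).card then W (Mx l) else 0)]
    have hin : ∀ h' ∈ Finset.Icc 1 (r+1),
        (∑ l ∈ (NCF r).filter (fun l => (ExtF l).card = h'),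
          if h ≤ (ExtF l).card then W (Mx l) else 0)
        = if h ≤ h' then
            ∑ l ∈ (NCF r).filter (fun l => (ExtF l).card = h'), W (Mx l) else 0 := by
      intro h' _
      by_cases hc : h ≤ h'
      · rw [if_pos hc]
        apply Finset.sum_congr rfl
        intro l hl
        have : (ExtF l).card = h' := (Finset.mem_filter.mp hl).2
        rw [if_pos (by omega)]
      · rw [if_neg hc]
        apply Finset.sum_eq_zero
        intro l hl
        have : (ExtF l).card = h' := (Finset.mem_filter.mp hl).2
        rw [if_neg (by omega)]
    rw [Finset.sum_congr rfl hin, ← Finset.sum_filter]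
    have : (Finset.Icc 1 (r+1)).filter (fun h' => h ≤ h') = Finset.Icc h (r+1) := by
      ext t
      simp only [Finset.mem_filter, Finset.mem_Icc]
      omega
    rw [this]

lemma main (r : ℕ) (hr : 1 ≤ r) :
    (∀ h, 1 ≤ h → h ≤ r + 1 →
      (∑ l ∈ (NCF r).filter (fun l => (ExtF l).card = h), (1:ℤ)) = fA r h) ∧
    (∀ h, 1 ≤ h → h ≤ r + 1 →
      (∑ l ∈ (NCF r).filter (fun l => (ExtF l).card = h), (Mx l : ℤ)) = fB r h) := by
  induction r with
  | zero => omega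
  | succ r ih =>
    rcases Nat.eq_zero_or_pos r with rfl | hr1
    · -- base case r + 1 = 1
      have hNCF : NCF 1 = {[1]} := by decide
      have hcard : (ExtF [1]).card = 2 := by decide
      have hMx : Mx [1] = 1 := by decide
      constructor <;> intro h h1 h2 <;> interval_cases h
      · rw [hNCF, Finset.filter_singleton, if_neg (by omega), Finset.sum_empty,
          fA_one 1 (le_refl _)]
      · rw [hNCF, Finset.filter_singleton, if_pos (by omega), Finset.sum_singleton]
        decide
      · rw [hNCF, Finset.filter_singleton, if_neg (by omega), Finset.sum_empty, fB_one]
      · rw [hNCF, Finset.filter_singleton, if_pos (by omega), Finset.sum_singleton, hMx]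
        decide
    · obtain ⟨IHA, IHB⟩ := ih hr1
      have hfilone : ∀ h, h = 1 →
          (NCF (r+1)).filter (fun l => (ExtF l).card = h) = ∅ := by
        intro h rfl'
        subst rfl'
        apply Finset.filter_false_of_mem
        intro l hl
        have := NCF_card_lb (by omega) hl
        omega
      constructor <;> intro h h1 h2
      · rcases Nat.lt_or_ge h 2 with hh1 | hh2
        · rw [hfilone h (by omega), Finset.sum_empty, show h = 1 by omega,
            fA_one (r+1) (by omega)]
        · rw [step_count r h hr1 hh2 (fun _ => (1:ℤ))]
          rw [IHA (h-1) (by omega) (by omega)]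
          have hsum : ∀ h' ∈ Finset.Icc h (r+1),
              (∑ l ∈ (NCF r).filter (fun l => (ExtF l).card = h'), (1:ℤ)) = fA r h' := by
            intro h' hh'
            rw [Finset.mem_Icc] at hh'
            exact IHA h' (by omega) (by omega)
          rw [Finset.sum_congr rfl hsum, sumA r hr1 (r + 2 - h) h (by omega) hh2]
          exact recA r h hr1 hh2 (by omega)
      · rcases Nat.lt_or_ge h 2 with hh1 | hh2
        · rw [hfilone h (by omega), Finset.sum_empty, show h = 1 by omega, fB_one]
        · rw [step_count r h hr1 hh2 (fun m => (m:ℤ))]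
          have e1 : (∑ l ∈ (NCF r).filter (fun l => (ExtF l).card = h - 1),
              ((Mx l + 1 : ℕ) : ℤ)) = fB r (h-1) + fA r (h-1) := by
            push_cast
            rw [Finset.sum_add_distrib, IHB (h-1) (by omega) (by omega),
              IHA (h-1) (by omega) (by omega)]
          rw [e1]
          have hsum : ∀ h' ∈ Finset.Icc h (r+1),
              (∑ l ∈ (NCF r).filter (fun l => (ExtF l).card = h'), ((Mx l : ℕ) : ℤ))
                = fB r h' := by
            intro h' hh'
            rw [Finset.mem_Icc] at hh'
            exact IHB h' (by omega) (by omega)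
          rw [Finset.sum_congr rfl hsum]
          rcases Nat.lt_or_ge h (r+2) with hlt | hge
          · rw [sumB r hr1 (r + 1 - h) h (by omega) hh2]
            exact recB1 r h hr1 hh2 (by omega)
          · have : h = r + 2 := by omega
            subst this
            rw [Finset.Icc_eq_empty (by omega), Finset.sum_empty, add_zero,
              show r + 2 - 1 = r + 1 by omega]
            exact recB2 r hr1

end NCaux

namespace NCaux
open Finset

lemma total (r : ℕ) (hr : 1 ≤ r) :
    (∑ l ∈ NCF r, (Mx l : ℤ)) = Nat.choose (2*r - 1) r := by
  obtain ⟨_, IHB⟩ := main r hr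
  have hmaps : ∀ l ∈ NCF r, (ExtF l).card ∈ Finset.Icc 1 (r+1) := by
    intro l hl
    rw [Finset.mem_Icc]
    exact ⟨by have := NCF_card_lb hr hl; omega, NCF_card_ub hl⟩
  rw [← Finset.sum_fiberwise_of_maps_to hmaps (fun l => (Mx l : ℤ))]
  have hin : ∀ h ∈ Finset.Icc 1 (r+1),
      (∑ l ∈ (NCF r).filter (fun l => (ExtF l).card = h), (Mx l : ℤ)) = fB r h := by
    intro h hh
    rw [Finset.mem_Icc] at hh
    exact IHB h hh.1 hh.2
  rw [Finset.sum_congr rfl hin, Icc_insert_left (by omega : 1 ≤ r + 1),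
    Finset.sum_insert (by simp), fB_one, zero_add,
    sumB r hr (r - 1) 2 (by omega) (le_refl _)]
  exact final_identity r hr

lemma total_nat (r : ℕ) (hr : 1 ≤ r) :
    (∑ l ∈ NCF r, Mx l) = Nat.choose (2*r - 1) r := by
  have h := total r hr
  have : ((∑ l ∈ NCF r, Mx l : ℕ) : ℤ) = ((Nat.choose (2*r - 1) r : ℕ) : ℤ) := by
    push_cast
    exact h
  exact_mod_cast this

end NCaux


/-- The total number of blocks over all non-crossing partitions of [r] equals
binom(2r−1, r), for r ≥ 1.  (The number of blocks of π is the maximum letter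
of its canonical sequential form; the total is counted via pairs (π, j) with
1 ≤ j ≤ number of blocks of π.) -/
theorem stmt5 (r : ℕ) (hr : 1 ≤ r) :
    Nat.card {p : List ℕ × ℕ //
        NCseq r p.1 ∧ 1 ≤ p.2 ∧ p.2 ≤ p.1.foldr max 0} =
      Nat.choose (2 * r - 1) r := by

  classical
  set P : Finset (List ℕ × ℕ) :=
    (NCaux.NCF r).biUnion (fun l => (Finset.Icc 1 (NCaux.Mx l)).image (fun j => (l, j)))
    with hP
  have hmem : ∀ p : List ℕ × ℕ,
      (NCseq r p.1 ∧ 1 ≤ p.2 ∧ p.2 ≤ p.1.foldr max 0) ↔ p ∈ P := by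
    intro p
    simp only [hP, Finset.mem_biUnion, Finset.mem_image, Finset.mem_Icc]
    constructor
    · rintro ⟨h1, h2, h3⟩
      exact ⟨p.1, NCaux.mem_NCF.mpr h1, p.2, ⟨h2, h3⟩, rfl⟩
    · rintro ⟨l, hl, j, ⟨hj1, hj2⟩, rfl⟩
      exact ⟨NCaux.mem_NCF.mp hl, hj1, hj2⟩
  have hequiv : Nat.card {p : List ℕ × ℕ //
      NCseq r p.1 ∧ 1 ≤ p.2 ∧ p.2 ≤ p.1.foldr max 0} = P.card := by
    rw [← Nat.card_eq_finsetCard]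
    exact Nat.card_congr (Equiv.subtypeEquivRight fun p => hmem p)
  rw [hequiv]
  have hcard : P.card = ∑ l ∈ NCaux.NCF r, NCaux.Mx l := by
    rw [hP, Finset.card_biUnion]
    · apply Finset.sum_congr rfl
      intro l _
      rw [Finset.card_image_of_injective _ (fun a b h => by simpa using h), Nat.card_Icc]
      omega
    · intro a _ b _ hab
      simp only [Function.onFun]
      rw [Finset.disjoint_left]
      rintro ⟨l, j⟩ h1 h2
      rw [Finset.mem_image] at h1 h2
      obtain ⟨x, _, hx⟩ := h1
      obtain ⟨y, _, hy⟩ := h2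
      apply hab
      have e1 : a = l := congrArg Prod.fst hx
      have e2 : b = l := congrArg Prod.fst hy
      rw [e1, e2]
  rw [hcard]
  exact NCaux.total_nat r hr
end

section
/- The total number of ascents over all non-crossing partitions of [r] equals binom(2r−1, r) − C_r = binom(2r−1, r+1) for r ≥ 1, where C_r is the r-th Catalan number. -/
namespace NCP

def mx (l : List ℕ) : ℕ := l.foldr max 0

lemma mx_nil : mx [] = 0 := rfl
lemma mx_cons (a : ℕ) (t : List ℕ) : mx (a :: t) = max a (mx t) := rfl

lemma mx_append (s t : List ℕ) : mx (s ++ t) = max (mx s) (mx t) := by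
  induction s with
  | nil => simp [mx]
  | cons a s ih => simp [mx_cons, List.cons_append, ih, max_assoc]

lemma le_mx_of_mem {a : ℕ} {l : List ℕ} (h : a ∈ l) : a ≤ mx l := by
  induction l with
  | nil => simp at h
  | cons b t ih =>
      rcases List.mem_cons.1 h with h | h
      · simp [mx_cons, h]
      · exact le_trans (ih h) (le_max_right _ _)

lemma mx_le {l : List ℕ} {b : ℕ} (h : ∀ a ∈ l, a ≤ b) : mx l ≤ b := by
  induction l with
  | nil => simp [mx]
  | cons a t ih =>
      simp only [mx_cons, max_le_iff]
      exact ⟨h a (by simp), ih fun x hx => h x (List.mem_cons_of_mem _ hx)⟩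

lemma getD_mem {l : List ℕ} {i : ℕ} (h : i < l.length) : l.getD i 0 ∈ l := by
  rw [List.getD_eq_getElem l 0 h]
  exact List.getElem_mem _

lemma getD_le_mx {l : List ℕ} {i : ℕ} (h : i < l.length) : l.getD i 0 ≤ mx l :=
  le_mx_of_mem (getD_mem h)

lemma getD_take {l : List ℕ} {i k : ℕ} (h : i < k) :
    (l.take k).getD i 0 = l.getD i 0 := by
  by_cases hi : i < l.length
  · rw [List.getD_eq_getElem _ 0 (by simp [hi, h, lt_min_iff]), List.getD_eq_getElem l 0 hi]
    simp
  · rw [List.getD_eq_default, List.getD_eq_default] <;> simp at hi ⊢ <;> omega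

lemma mx_take_succ {l : List ℕ} {k : ℕ} (h : k < l.length) :
    mx (l.take (k + 1)) = max (mx (l.take k)) (l.getD k 0) := by
  rw [List.take_succ, mx_append]
  congr 1
  rw [List.getD_eq_getElem l 0 h]
  simp [mx, List.getElem?_eq_getElem h]

lemma mx_take_le_mx (l : List ℕ) (k : ℕ) : mx (l.take k) ≤ mx l :=
  mx_le fun a ha => le_mx_of_mem (List.mem_of_mem_take ha)

lemma mx_take_mono (l : List ℕ) {j k : ℕ} (h : j ≤ k) : mx (l.take j) ≤ mx (l.take k) := by
  have : l.take j = (l.take k).take j := by rw [List.take_take, min_eq_left h]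
  rw [this]; exact mx_take_le_mx _ _


section RGS
variable {l : List ℕ}

lemma rgs_pos (hR : IsRGS l) {i : ℕ} (h : i < l.length) : 1 ≤ l.getD i 0 :=
  hR.2.1 _ (getD_mem h)

lemma rgs_head (hR : IsRGS l) (h : 0 < l.length) : l.getD 0 0 = 1 := by
  have := hR.1
  rwa [List.getD_eq_getElem l 1 h, ← List.getD_eq_getElem l 0 h] at this

lemma rgs_step (hR : IsRGS l) {i : ℕ} (h : i + 1 < l.length) :
    l.getD (i + 1) 0 ≤ mx (l.take (i + 1)) + 1 := hR.2.2 i h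

lemma rgs_getD_le_mx_take (hR : IsRGS l) {i k : ℕ} (hik : i < k) (h : i < l.length) :
    l.getD i 0 ≤ mx (l.take k) := by
  have : l.getD i 0 = (l.take k).getD i 0 := (getD_take hik).symm
  rw [this]
  exact getD_le_mx (by simp; omega)

lemma rgs_mx_take_le (hR : IsRGS l) (k : ℕ) : mx (l.take k) ≤ k := by
  induction k with
  | zero => simp [mx]
  | succ k ih =>
      by_cases hk : k < l.length
      · rw [mx_take_succ hk]
        rcases Nat.eq_zero_or_pos k with rfl | hkpos
        · rw [List.take_zero, rgs_head hR hk]; simp [mx]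
        · have := rgs_step hR (i := k - 1) (by omega)
          have hk1 : k - 1 + 1 = k := by omega
          rw [hk1] at this
          have := ih
          omega
      · rw [List.take_of_length_le (by omega), ← List.take_of_length_le (le_of_not_gt hk)]
        exact le_trans ih (by omega)

/-- every value `1 ≤ v ≤ mx (take k)` occurs in the prefix of length `k` -/
lemma rgs_occurs (hR : IsRGS l) {k v : ℕ} (h1 : 1 ≤ v) (h2 : v ≤ mx (l.take k)) :
    ∃ j, j < k ∧ j < l.length ∧ l.getD j 0 = v := by
  induction k with
  | zero => simp [mx] at h2; omega
  | succ k ih =>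
      by_cases hk : k < l.length
      · rw [mx_take_succ hk] at h2
        rcases le_max_iff.1 h2 with h2 | h2
        · obtain ⟨j, hj1, hj2, hj3⟩ := ih h2
          exact ⟨j, by omega, hj2, hj3⟩
        · -- v ≤ l.getD k 0
          by_cases hle : v ≤ mx (l.take k)
          · obtain ⟨j, hj1, hj2, hj3⟩ := ih hle
            exact ⟨j, by omega, hj2, hj3⟩
          · push_neg at hle
            -- l.getD k 0 ≤ mx (take k) + 1, and v > mx take k, v ≤ getD k
            have hkd : l.getD k 0 ≤ mx (l.take k) + 1 := by
              rcases Nat.eq_zero_or_pos k with rfl | hkpos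
              · rw [rgs_head hR hk]; omega
              · have := rgs_step hR (i := k - 1) (by omega)
                have hk1 : k - 1 + 1 = k := by omega
                rw [hk1] at this
                exact le_trans this (by have := mx_take_mono l (le_of_eq hk1.symm); omega)
            exact ⟨k, by omega, hk, by omega⟩
      · rw [List.take_of_length_le (by omega)] at h2
        rw [← List.take_of_length_le (le_of_not_gt hk)] at h2
        obtain ⟨j, hj1, hj2, hj3⟩ := ih h2
        exact ⟨j, by omega, hj2, hj3⟩

/-- at a first occurrence of `v ≥ 2`, the prefix max is exactly `v - 1`. -/
lemma rgs_first_occ_mx (hR : IsRGS l) {q v : ℕ} (hv : 2 ≤ v) (hq : q < l.length)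
    (hval : l.getD q 0 = v) (hfirst : ∀ p, p < q → l.getD p 0 ≠ v) :
    mx (l.take q) + 1 = v ∧ 1 ≤ q := by
  have hq1 : 1 ≤ q := by
    rcases Nat.eq_zero_or_pos q with rfl | h
    · rw [rgs_head hR hq] at hval; omega
    · exact h
  have hub : mx (l.take q) + 1 < v + 1 := by
    by_contra hc
    push_neg at hc
    obtain ⟨j, hj1, hj2, hj3⟩ := rgs_occurs hR (k := q) (v := v) (by omega) (by omega)
    exact hfirst j hj1 hj3
  have hlb : v ≤ mx (l.take q) + 1 := by
    have := rgs_step hR (i := q - 1) (by omega)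
    have hk1 : q - 1 + 1 = q := by omega
    rw [hk1] at this
    omega
  exact ⟨by omega, hq1⟩

/-- simplified crossing criterion for RGS sequences -/
lemma crossing_of_cross2 (hR : IsRGS l) {j k m : ℕ} (hjk : j < k) (hkm : k < m)
    (hm : m < l.length) (hjm : l.getD j 0 = l.getD m 0) (hlt : l.getD k 0 < l.getD m 0) :
    Crossing l := by
  classical
  set b := l.getD m 0 with hb
  set a := l.getD k 0 with ha
  have ha1 : 1 ≤ a := rgs_pos hR (by omega)
  -- first occurrence q of b
  have hex : ∃ q, l.getD q 0 = b ∧ q < l.length := ⟨j, hjm, by omega⟩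
  let q := Nat.find hex
  obtain ⟨hqval, hqlen⟩ : l.getD q 0 = b ∧ q < l.length := Nat.find_spec hex
  have hqmin : ∀ p, p < q → l.getD p 0 ≠ b := by
    intro p hp hpv
    exact absurd ⟨hpv, by omega⟩ (Nat.find_min hex hp)
  have hqj : q ≤ j := by
    by_contra hc
    exact hqmin j (by omega) hjm
  obtain ⟨hmx, hq1⟩ := rgs_first_occ_mx hR (v := b) (by omega) hqlen hqval hqmin
  -- a occurs before q
  obtain ⟨i, hi1, hi2, hi3⟩ := rgs_occurs hR (k := q) (v := a) ha1 (by omega)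
  have hik : i < j := by omega
  have hqk : q < k := by
    rcases lt_or_eq_of_le (show q ≤ k by omega) with h | h
    · exact h
    · rw [h] at hqval; omega
  exact ⟨i, q, k, m, by omega, hqk, hkm, hm, by rw [hi3], by rw [hqval], by omega⟩

end RGS


/-! ### encode -/

def emap (m v : ℕ) : ℕ := if v = 1 then 1 else v + m

def encode (σ τ : List ℕ) : List ℕ :=
  1 :: (σ.map (· + 1) ++ τ.map (emap (mx σ)))

lemma emap_one (m : ℕ) : emap m 1 = 1 := rfl

lemma emap_pos (m : ℕ) {v : ℕ} (h : 1 ≤ v) : 1 ≤ emap m v := by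
  unfold emap; split <;> omega

lemma emap_eq_one_iff {m v : ℕ} (h : 1 ≤ v) : emap m v = 1 ↔ v = 1 := by
  unfold emap; split <;> omega

lemma emap_big {m v : ℕ} (h : 2 ≤ v) : emap m v = v + m := by
  unfold emap; split <;> omega

lemma emap_inj {m u v : ℕ} (hu : 1 ≤ u) (hv : 1 ≤ v) : emap m u = emap m v ↔ u = v := by
  unfold emap; split <;> split <;> omega

lemma emap_lt {m u v : ℕ} (hu : 1 ≤ u) (hv : 1 ≤ v) : emap m u < emap m v ↔ u < v := by
  unfold emap; split <;> split <;> omega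

lemma encode_length (σ τ : List ℕ) :
    (encode σ τ).length = σ.length + τ.length + 1 := by
  simp only [encode, List.length_cons, List.length_append, List.length_map]

lemma encode_getD_zero (σ τ : List ℕ) : (encode σ τ).getD 0 0 = 1 := rfl

lemma encode_getD_sigma (σ τ : List ℕ) {t : ℕ} (h : t < σ.length) :
    (encode σ τ).getD (t + 1) 0 = σ.getD t 0 + 1 := by
  show (σ.map (· + 1) ++ τ.map (emap (mx σ))).getD t 0 = _
  rw [List.getD_append _ _ _ _ (by simpa using h),
    List.getD_eq_getElem _ 0 (by simpa using h), List.getElem_map,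
    ← List.getD_eq_getElem _ 0 h]

lemma encode_getD_tau (σ τ : List ℕ) {t : ℕ} (h : t < τ.length) :
    (encode σ τ).getD (σ.length + 1 + t) 0 = emap (mx σ) (τ.getD t 0) := by
  have : σ.length + 1 + t = ((σ.map (· + 1)).length + t) + 1 := by simp; omega
  rw [this]
  show (σ.map (· + 1) ++ τ.map (emap (mx σ))).getD _ 0 = _
  rw [List.getD_append_right _ _ _ _ (by omega)]
  have h2 : (List.map (· + 1) σ).length + t - (List.map (· + 1) σ).length = t := by omega
  rw [h2, List.getD_eq_getElem _ 0 (by simpa using h), List.getElem_map,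
    ← List.getD_eq_getElem _ 0 h]

lemma mx_map_succ (l : List ℕ) : max 1 (mx (l.map (· + 1))) = mx l + 1 := by
  induction l with
  | nil => simp [mx]
  | cons a t ih => simp only [List.map_cons, mx_cons] at *; omega

lemma mx_map_emap (m : ℕ) {s : List ℕ} (h : ∀ x ∈ s, 1 ≤ x) :
    max 1 (mx (s.map (emap m))) = emap m (max (mx s) 1) := by
  induction s with
  | nil => simp [mx, emap]
  | cons a t ih =>
      have ha : 1 ≤ a := h a (by simp)
      have ih' := ih (fun x hx => h x (List.mem_cons_of_mem _ hx))
      simp only [List.map_cons, mx_cons] at *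
      simp only [emap] at ih' ⊢
      split at ih' <;> split <;> split <;> omega

lemma encode_take_sigma (σ τ : List ℕ) {t : ℕ} (h : t ≤ σ.length) :
    (encode σ τ).take (t + 1) = 1 :: (σ.take t).map (· + 1) := by
  simp only [encode, List.take_succ_cons]
  congr 1
  rw [List.take_append_of_le_length (by simpa using h), List.map_take]

lemma encode_take_tau (σ τ : List ℕ) {t : ℕ} :
    (encode σ τ).take (σ.length + 1 + t) = 1 :: (σ.map (· + 1) ++ (τ.take t).map (emap (mx σ))) := by
  have : σ.length + 1 + t = ((σ.map (· + 1)).length + t) + 1 := by simp; omega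
  rw [this]
  simp only [encode, List.take_succ_cons]
  congr 1
  rw [List.take_append, List.map_take]
  rw [List.take_of_length_le (by omega), Nat.add_sub_cancel_left]

lemma mx_encode_take_sigma (σ τ : List ℕ) {t : ℕ} (h : t ≤ σ.length) :
    mx ((encode σ τ).take (t + 1)) = mx (σ.take t) + 1 := by
  rw [encode_take_sigma σ τ h, mx_cons, mx_map_succ]

lemma mx_encode_take_tau (σ τ : List ℕ) {t : ℕ} (hτ : ∀ x ∈ τ, 1 ≤ x) :
    mx ((encode σ τ).take (σ.length + 1 + t)) = mx σ + max (mx (τ.take t)) 1 := by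
  rw [encode_take_tau, mx_cons, mx_append]
  rw [max_comm (mx (List.map (· + 1) σ)), ← max_assoc]
  rw [mx_map_emap (mx σ) (fun x hx => hτ x (List.mem_of_mem_take hx))]
  rw [max_comm]
  have h2 := mx_map_succ σ
  rcases le_or_gt (mx (τ.take t)) 1 with h3 | h3
  · rw [max_eq_right h3, emap_one]
    omega
  · rw [max_eq_left (le_of_lt h3), emap_big h3]
    have : max 1 (mx (σ.map (· + 1))) ≤ mx σ + 1 := le_of_eq h2
    omega

lemma mx_encode (σ τ : List ℕ) (hτ : ∀ x ∈ τ, 1 ≤ x) :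
    mx (encode σ τ) = mx σ + max (mx τ) 1 := by
  have := mx_encode_take_tau σ τ (t := τ.length) hτ
  rwa [List.take_of_length_le (by rw [encode_length]; omega), List.take_length] at this



/-! ### encode preserves NCseq -/

lemma encode_val_sigma (σ τ : List ℕ) {p : ℕ} (h1 : 1 ≤ p) (h2 : p ≤ σ.length) :
    (encode σ τ).getD p 0 = σ.getD (p - 1) 0 + 1 := by
  obtain ⟨q, rfl⟩ : ∃ q, p = q + 1 := ⟨p - 1, by omega⟩
  rw [encode_getD_sigma σ τ (by omega)]
  norm_num

lemma encode_val_tau (σ τ : List ℕ) {p : ℕ} (h1 : σ.length + 1 ≤ p)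
    (h2 : p < σ.length + 1 + τ.length) :
    (encode σ τ).getD p 0 = emap (mx σ) (τ.getD (p - σ.length - 1) 0) := by
  obtain ⟨t, rfl⟩ : ∃ t, p = σ.length + 1 + t := ⟨p - σ.length - 1, by omega⟩
  have h3 : σ.length + 1 + t - σ.length - 1 = t := by omega
  rw [encode_getD_tau σ τ (by omega), h3]

lemma isRGS_encode {σ τ : List ℕ} (hσ : IsRGS σ) (hτ : IsRGS τ) :
    IsRGS (encode σ τ) := by
  refine ⟨rfl, ?_, ?_⟩
  · intro x hx
    simp only [encode, List.mem_cons, List.mem_append, List.mem_map] at hx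
    rcases hx with rfl | ⟨y, hy, rfl⟩ | ⟨y, hy, rfl⟩
    · exact le_refl 1
    · omega
    · exact emap_pos _ (hτ.2.1 y hy)
  · intro i hi
    rw [encode_length] at hi
    show (encode σ τ).getD (i+1) 0 ≤ mx ((encode σ τ).take (i+1)) + 1
    rcases Nat.lt_or_ge i σ.length with hz | hz
    · -- sigma zone
      rw [encode_getD_sigma σ τ hz, mx_encode_take_sigma σ τ (by omega)]
      rcases Nat.eq_zero_or_pos i with rfl | hipos
      · rw [rgs_head hσ (by omega)]; omega
      · have := rgs_step hσ (i := i - 1) (by omega)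
        have h1 : i - 1 + 1 = i := by omega
        rw [h1] at this
        omega
    · -- tau zone
      obtain ⟨t, rfl⟩ : ∃ t, i = σ.length + t := ⟨i - σ.length, by omega⟩
      have hts : σ.length + t + 1 = σ.length + 1 + t := by omega
      have htl : t < τ.length := by omega
      rw [hts, encode_getD_tau σ τ htl, mx_encode_take_tau σ τ hτ.2.1]
      have hpos : 1 ≤ τ.getD t 0 := rgs_pos hτ htl
      by_cases hone : τ.getD t 0 = 1
      · rw [hone, emap_one]; omega
      · rw [emap_big (by omega)]
        have ht1 : 1 ≤ t := by
          rcases Nat.eq_zero_or_pos t with rfl | h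
          · exact absurd (rgs_head hτ (by omega)) hone
          · exact h
        have := rgs_step hτ (i := t - 1) (by omega)
        have h1 : t - 1 + 1 = t := by omega
        rw [h1] at this
        have : τ.getD t 0 ≤ max (mx (τ.take t)) 1 + 1 := le_trans this (by simp)
        omega

lemma crossing_encode_left {σ : List ℕ} (τ : List ℕ) (h : Crossing σ) :
    Crossing (encode σ τ) := by
  obtain ⟨i, j, k, m, hij, hjk, hkm, hm, e1, e2, e3⟩ := h
  refine ⟨i+1, j+1, k+1, m+1, by omega, by omega, by omega, ?_, ?_, ?_, ?_⟩
  · rw [encode_length]; omega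
  all_goals rw [encode_getD_sigma σ τ (by omega), encode_getD_sigma σ τ (by omega)] <;> omega

lemma pos_getD {l : List ℕ} (h : ∀ x ∈ l, 1 ≤ x) {i : ℕ} (hi : i < l.length) :
    1 ≤ l.getD i 0 := h _ (getD_mem hi)

lemma ext_getD {l l' : List ℕ} (hlen : l.length = l'.length)
    (h : ∀ i, i < l.length → l.getD i 0 = l'.getD i 0) : l = l' := by
  apply List.ext_getElem hlen
  intro i h1 h2
  have := h i h1
  rwa [List.getD_eq_getElem _ 0 h1, List.getD_eq_getElem _ 0 h2] at this

lemma crossing_encode_right (σ : List ℕ) {τ : List ℕ} (hτp : ∀ x ∈ τ, 1 ≤ x) (h : Crossing τ) :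
    Crossing (encode σ τ) := by
  obtain ⟨i, j, k, m, hij, hjk, hkm, hm, e1, e2, e3⟩ := h
  have L := σ.length
  refine ⟨σ.length+1+i, σ.length+1+j, σ.length+1+k, σ.length+1+m,
    by omega, by omega, by omega, ?_, ?_, ?_, ?_⟩
  · rw [encode_length]; omega
  all_goals
    rw [encode_getD_tau σ τ (by omega), encode_getD_tau σ τ (by omega)]
  · rw [emap_inj (pos_getD hτp (by omega)) (pos_getD hτp (by omega))]; exact e1
  · rw [emap_inj (pos_getD hτp (by omega)) (pos_getD hτp (by omega))]; exact e2
  · rw [emap_lt (pos_getD hτp (by omega)) (pos_getD hτp (by omega))]; exact e3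

lemma crossing_encode_cases {σ τ : List ℕ} (hσ : IsRGS σ) (hτ : IsRGS τ)
    (h : Crossing (encode σ τ)) : Crossing σ ∨ Crossing τ := by
  obtain ⟨i, j, k, m, hij, hjk, hkm, hm, e1, e2, e3⟩ := h
  rw [encode_length] at hm
  -- basic value facts
  have hval0 : (encode σ τ).getD 0 0 = 1 := encode_getD_zero σ τ
  have hvalσ : ∀ p, 1 ≤ p → p ≤ σ.length → 2 ≤ (encode σ τ).getD p 0 ∧ (encode σ τ).getD p 0 ≤ mx σ + 1 := by
    intro p h1 h2
    rw [encode_val_sigma σ τ h1 h2]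
    have : σ.getD (p-1) 0 ≤ mx σ := getD_le_mx (by omega)
    have : 1 ≤ σ.getD (p-1) 0 := rgs_pos hσ (by omega)
    omega
  have hvalτ : ∀ p, σ.length + 1 ≤ p → p < σ.length + 1 + τ.length →
      ((encode σ τ).getD p 0 = 1 ∧ τ.getD (p - σ.length - 1) 0 = 1) ∨
      (mx σ + 2 ≤ (encode σ τ).getD p 0 ∧ (encode σ τ).getD p 0 = τ.getD (p - σ.length - 1) 0 + mx σ ∧
        2 ≤ τ.getD (p - σ.length - 1) 0) := by
    intro p h1 h2
    rw [encode_val_tau σ τ h1 h2]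
    have hpos : 1 ≤ τ.getD (p - σ.length - 1) 0 := rgs_pos hτ (by omega)
    by_cases hone : τ.getD (p - σ.length - 1) 0 = 1
    · left; rw [hone, emap_one]; exact ⟨rfl, rfl⟩
    · right; rw [emap_big (by omega)]; omega
  have hpos : ∀ p, p < σ.length + 1 + τ.length → 1 ≤ (encode σ τ).getD p 0 := by
    intro p hp
    rcases Nat.eq_zero_or_pos p with rfl | h1
    · omega
    rcases le_or_gt p σ.length with h2 | h2
    · have := hvalσ p h1 h2; omega
    · rcases hvalτ p (by omega) hp with ⟨h3, _⟩ | ⟨h3, _⟩ <;> omega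
  -- j ≥ 1
  have hj1 : 1 ≤ j := by
    rcases Nat.eq_zero_or_pos j with rfl | h1
    · rw [hval0] at e3; have := hpos i (by omega); omega
    · exact h1
  rcases le_or_gt m σ.length with hmL | hmL
  · -- everything in sigma zone
    left
    have hk1 : 1 ≤ k := by omega
    have hi1 : 1 ≤ i := by
      rcases Nat.eq_zero_or_pos i with rfl | h1
      · rw [hval0] at e1
        have := hvalσ k hk1 (by omega)
        omega
      · exact h1
    have fi := encode_val_sigma σ τ hi1 (by omega : i ≤ σ.length)
    have fj := encode_val_sigma σ τ hj1 (by omega : j ≤ σ.length)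
    have fk := encode_val_sigma σ τ hk1 (by omega : k ≤ σ.length)
    have fm := encode_val_sigma σ τ (by omega : 1 ≤ m) hmL
    exact ⟨i-1, j-1, k-1, m-1, by omega, by omega, by omega, by omega,
      by rw [fi, fk] at e1; omega, by rw [fj, fm] at e2; omega,
      by rw [fi, fj] at e3; omega⟩
  · -- m in tau zone
    right
    have hmv : mx σ + 2 ≤ (encode σ τ).getD m 0 := by
      rcases hvalτ m (by omega) (by omega) with ⟨h3, _⟩ | ⟨h3, _, _⟩
      · rw [h3] at e2; have := hpos i (by omega); omega
      · exact h3
    have hjL : σ.length + 1 ≤ j := by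
      rcases Nat.eq_zero_or_pos j with rfl | h1
      · omega
      rcases le_or_gt j σ.length with h2 | h2
      · have := hvalσ j h1 h2; omega
      · omega
    have hkL : σ.length + 1 ≤ k := by omega
    -- tau-zone relation extraction
    rcases hvalτ j hjL (by omega) with ⟨hj3, _⟩ | ⟨_, hj4, hj5⟩
    · omega
    rcases hvalτ m (by omega) (by omega) with ⟨hm3, _⟩ | ⟨_, hm4, hm5⟩
    · omega
    rcases hvalτ k hkL (by omega) with ⟨hk3, hk3'⟩ | ⟨_, hk4, hk5⟩
    · -- e_k = 1, so e_i = 1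
      rcases Nat.eq_zero_or_pos i with rfl | hi1
      · -- use index 0 of tau
        have hτ0 : τ.getD 0 0 = 1 := rgs_head hτ (by omega)
        have hjτ : 1 ≤ j - σ.length - 1 := by
          rcases Nat.eq_zero_or_pos (j - σ.length - 1) with hz | h1
          · rw [hz] at hj5; omega
          · exact h1
        exact ⟨0, j - σ.length - 1, k - σ.length - 1, m - σ.length - 1, by omega, by omega, by omega, by omega,
          by rw [hτ0, hk3'], by omega, by rw [hτ0]; omega⟩
      · -- i in tau zone (sigma zone values ≥ 2 excluded since e_i = 1)
        have hiL : σ.length + 1 ≤ i := by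
          rcases le_or_gt i σ.length with h2 | h2
          · have := hvalσ i hi1 h2; rw [hk3] at e1; omega
          · omega
        rcases hvalτ i hiL (by omega) with ⟨hi3, hi3'⟩ | ⟨hi4, _, _⟩
        · exact ⟨i - σ.length - 1, j - σ.length - 1, k - σ.length - 1, m - σ.length - 1, by omega, by omega, by omega,
            by omega, by rw [hi3', hk3'], by omega, by rw [hi3']; omega⟩
        · rw [hk3] at e1; omega
    · -- e_k ≥ mx σ + 2, so i in tau zone
      have hiL : σ.length + 1 ≤ i := by
        rcases Nat.eq_zero_or_pos i with rfl | hi1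
        · omega
        rcases le_or_gt i σ.length with h2 | h2
        · have := hvalσ i hi1 h2; omega
        · omega
      rcases hvalτ i hiL (by omega) with ⟨hi3, _⟩ | ⟨_, hi4, hi5⟩
      · omega
      · exact ⟨i - σ.length - 1, j - σ.length - 1, k - σ.length - 1, m - σ.length - 1, by omega, by omega, by omega,
          by omega, by omega, by omega, by omega⟩

lemma ncseq_encode {a c : ℕ} {σ τ : List ℕ} (ha : NCseq a σ) (hc : NCseq c τ) :
    NCseq (a + c + 1) (encode σ τ) := by
  refine ⟨by rw [encode_length, ha.1, hc.1], isRGS_encode ha.2.1 hc.2.1, ?_⟩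
  intro h
  rcases crossing_encode_cases ha.2.1 hc.2.1 h with h | h
  · exact ha.2.2 h
  · exact hc.2.2 h

lemma crossing_encode_right' (σ : List ℕ) {τ : List ℕ} (hτ : IsRGS τ) (h : Crossing τ) :
    Crossing (encode σ τ) := crossing_encode_right σ hτ.2.1 h



lemma exists_encode {n : ℕ} {π : List ℕ} (h : NCseq (n + 1) π) :
    ∃ σ τ : List ℕ, NCseq σ.length σ ∧ NCseq τ.length τ ∧
      σ.length + τ.length = n ∧ encode σ τ = π := by
  classical
  obtain ⟨hlen, hR, hNC⟩ := h
  have hlen1 : 0 < π.length := by omega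
  have h0 : π.getD 0 0 = 1 := rgs_head hR hlen1
  obtain ⟨a, ha_le, ha_one, ha_min⟩ :
      ∃ a, a ≤ n ∧ (a < n → π.getD (1 + a) 0 = 1) ∧ (∀ i, i < a → π.getD (1 + i) 0 ≠ 1) := by
    by_cases hex : ∃ i, i < n ∧ π.getD (1 + i) 0 = 1
    · obtain ⟨hi1, hi2⟩ := Nat.find_spec hex
      exact ⟨Nat.find hex, by omega, fun _ => hi2, fun i hi hv =>
        Nat.find_min hex hi ⟨by omega, hv⟩⟩
    · push_neg at hex
      exact ⟨n, le_refl n, fun h => absurd h (by omega), fun i hi hv => hex i (by omega) hv⟩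
  obtain ⟨σ, hσdef⟩ : ∃ σ, σ = ((π.drop 1).take a).map (· - 1) := ⟨_, rfl⟩
  have hσlen : σ.length = a := by rw [hσdef]; simp; omega
  have hσval : ∀ t, t < a → σ.getD t 0 = π.getD (1 + t) 0 - 1 := by
    intro t ht
    rw [hσdef, List.getD_eq_getElem _ 0 (by simp; omega)]
    simp only [List.getElem_map, List.getElem_take, List.getElem_drop]
    rw [← List.getD_eq_getElem _ 0 (by omega)]
  have hπσ2 : ∀ t, t < a → 2 ≤ π.getD (1 + t) 0 := by
    intro t ht
    have h1 := rgs_pos hR (i := 1 + t) (by omega)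
    have h2 := ha_min t ht
    omega
  have hprefix : ∀ u, u ≤ a → mx (π.take (u + 1)) = mx (σ.take u) + 1 := by
    intro u
    induction u with
    | zero =>
        intro _
        rw [mx_take_succ (by omega), List.take_zero, List.take_zero, h0, mx_nil]
        omega
    | succ u ih =>
        intro hu
        rw [mx_take_succ (by omega), mx_take_succ (l := σ) (by omega), ih (by omega)]
        have h1 := hσval u (by omega)
        have h2 := hπσ2 u (by omega)
        have h3 : π.getD (u + 1) 0 = π.getD (1 + u) 0 := by rw [Nat.add_comm]
        omega
  have hmxσ : mx (π.take (a + 1)) = mx σ + 1 := by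
    have h1 := hprefix a (le_refl a)
    have h2 : σ.take a = σ := by rw [← hσlen, List.take_length]
    rwa [h2] at h1
  have hσRGS : IsRGS σ := by
    refine ⟨?_, ?_, ?_⟩
    · rcases Nat.eq_zero_or_pos a with rfl | ha1
      · have : σ = [] := List.eq_nil_of_length_eq_zero hσlen
        rw [this]; rfl
      · rw [List.getD_eq_getElem _ 1 (by omega), ← List.getD_eq_getElem _ 0 (by omega)]
        have h1 := hσval 0 ha1
        have h2 := hπσ2 0 ha1
        have h3 := rgs_step hR (i := 0) (by omega)
        have h4 : mx (π.take (0 + 1)) = mx (σ.take 0) + 1 := hprefix 0 (by omega)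
        rw [List.take_zero, mx_nil] at h4
        have h5 : π.getD (0 + 1) 0 = π.getD (1 + 0) 0 := by norm_num
        omega
    · intro x hx
      obtain ⟨t, ht, rfl⟩ := List.mem_iff_getElem.1 hx
      rw [← List.getD_eq_getElem _ 0 ht]
      rw [hσlen] at ht
      have := hσval t ht
      have := hπσ2 t ht
      omega
    · intro t ht
      show σ.getD (t + 1) 0 ≤ mx (σ.take (t + 1)) + 1
      rw [hσlen] at ht
      have h1 := hσval (t + 1) ht
      have h2 := hπσ2 (t + 1) ht
      have h3 := rgs_step hR (i := t + 1) (by omega)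
      have h4 := hprefix (t + 1) (by omega)
      have h5 : π.getD (t + 1 + 1) 0 = π.getD (1 + (t + 1)) 0 := by rw [Nat.add_comm]
      omega
  have hσNC : ¬ Crossing σ := by
    rintro ⟨i, j, k, m, hij, hjk, hkm, hm, e1, e2, e3⟩
    rw [hσlen] at hm
    apply hNC
    refine ⟨1 + i, 1 + j, 1 + k, 1 + m, by omega, by omega, by omega, by omega, ?_, ?_, ?_⟩
    · have := hσval i (by omega); have := hσval k (by omega)
      have := hπσ2 i (by omega); have := hπσ2 k (by omega); omega
    · have := hσval j (by omega); have := hσval m (by omega)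
      have := hπσ2 j (by omega); have := hπσ2 m (by omega); omega
    · have := hσval i (by omega); have := hσval j (by omega)
      have := hπσ2 i (by omega); have := hπσ2 j (by omega); omega
  obtain ⟨τ, hτdef⟩ : ∃ τ, τ = (π.drop (1 + a)).map (fun v => if v = 1 then 1 else v - mx σ) :=
    ⟨_, rfl⟩
  have hτlen : τ.length = n - a := by rw [hτdef]; simp; omega
  have hτval : ∀ t, t < n - a →
      τ.getD t 0 = if π.getD (1 + a + t) 0 = 1 then 1 else π.getD (1 + a + t) 0 - mx σ := by
    intro t ht
    rw [hτdef, List.getD_eq_getElem _ 0 (by simp; omega)]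
    simp only [List.getElem_map, List.getElem_drop]
    rw [← List.getD_eq_getElem _ 0 (by omega)]
  have hτ0 : 0 < n - a → π.getD (1 + a) 0 = 1 := fun h => ha_one (by omega)
  have hbig : ∀ t, t < n - a →
      π.getD (1 + a + t) 0 = 1 ∨ mx σ + 2 ≤ π.getD (1 + a + t) 0 := by
    intro t ht
    by_cases hone : π.getD (1 + a + t) 0 = 1
    · exact Or.inl hone
    right
    have hpos : 1 ≤ π.getD (1 + a + t) 0 := rgs_pos hR (by omega)
    have ht1 : 1 ≤ t := by
      rcases Nat.eq_zero_or_pos t with rfl | h1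
      · exact absurd (by simpa using hτ0 (by omega)) hone
      · exact h1
    by_contra hc
    push_neg at hc
    -- value ≤ mx σ + 1 = mx (π.take (a+1)), so it occurs in the prefix: crossing
    obtain ⟨i', hi'1, hi'2, hi'3⟩ := rgs_occurs hR (k := a + 1) (v := π.getD (1 + a + t) 0)
      (by omega) (by omega)
    have hi'pos : 1 ≤ i' := by
      rcases Nat.eq_zero_or_pos i' with rfl | h1
      · rw [h0] at hi'3; omega
      · exact h1
    exact hNC ⟨0, i', 1 + a, 1 + a + t, by omega, by omega, by omega, by omega,
      by rw [h0, hτ0 (by omega)], by rw [hi'3], by rw [h0]; omega⟩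
  have hτpos : ∀ x ∈ τ, 1 ≤ x := by
    intro x hx
    obtain ⟨t, ht, rfl⟩ := List.mem_iff_getElem.1 hx
    rw [← List.getD_eq_getElem _ 0 ht]
    rw [hτlen] at ht
    rw [hτval t ht]
    have := hbig t ht
    split <;> omega
  have henc : encode σ τ = π := by
    apply ext_getD
    · rw [encode_length, hσlen, hτlen, hlen]; omega
    intro p hp
    rw [encode_length, hσlen, hτlen] at hp
    rcases Nat.eq_zero_or_pos p with rfl | hp1
    · rw [encode_getD_zero, h0]
    rcases le_or_gt p a with hpa | hpa
    · rw [encode_val_sigma σ τ hp1 (by omega)]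
      have h1 := hσval (p - 1) (by omega)
      have h2 := hπσ2 (p - 1) (by omega)
      have h3 : 1 + (p - 1) = p := by omega
      rw [h3] at h1 h2
      omega
    · rw [encode_val_tau σ τ (by omega) (by rw [hσlen, hτlen]; omega)]
      have ht : p - σ.length - 1 < n - a := by rw [hσlen]; omega
      have h1 := hτval _ ht
      have h2 := hbig _ ht
      have h3 : 1 + a + (p - σ.length - 1) = p := by rw [hσlen]; omega
      rw [h3] at h1 h2
      rcases h2 with h2 | h2
      · rw [h1, if_pos h2, emap_one, h2]
      · rw [h1, if_neg (by omega), emap_big (by omega)]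
        omega
  have hτhead : τ.getD 0 1 = 1 := by
    rcases Nat.eq_zero_or_pos (n - a) with hz | h1
    · have : τ = [] := List.eq_nil_of_length_eq_zero (by omega)
      rw [this]; rfl
    · rw [List.getD_eq_getElem _ 1 (by omega), ← List.getD_eq_getElem _ 0 (by omega)]
      have h2 : 1 + a + 0 = 1 + a := by omega
      rw [hτval 0 h1, h2, if_pos (hτ0 h1)]
  have hτRGS : IsRGS τ := by
    refine ⟨hτhead, hτpos, ?_⟩
    intro t ht
    show τ.getD (t + 1) 0 ≤ mx (τ.take (t + 1)) + 1
    rw [hτlen] at ht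
    have h1 := hτval (t + 1) ht
    have h2 := hbig (t + 1) ht
    rcases h2 with h2 | h2
    · rw [h1, if_pos h2]; omega
    rw [h1, if_neg (by omega)]
    -- use prefix max of encode
    have h3 := rgs_step hR (i := a + t + 1) (by omega)
    have h4 : a + t + 1 + 1 = a + 1 + (t + 1) := by omega
    rw [h4] at h3
    have h5 : mx (π.take (a + 1 + (t + 1))) = mx σ + max (mx (τ.take (t + 1))) 1 := by
      rw [← henc]
      have := mx_encode_take_tau σ τ (t := t + 1) hτpos
      rwa [hσlen] at this
    have h6 : 1 ≤ mx (τ.take (t + 1)) := by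
      have h7 : (τ.take (t + 1)).getD 0 0 = τ.getD 0 0 := getD_take (by omega)
      have h8 : τ.getD 0 0 = 1 := by
        rw [List.getD_eq_getElem _ 0 (by omega), ← List.getD_eq_getElem _ 1 (by omega), hτhead]
      have h9 : (τ.take (t + 1)).getD 0 0 ≤ mx (τ.take (t + 1)) :=
        getD_le_mx (by simp; omega)
      omega
    have h10 : π.getD (a + 1 + (t + 1)) 0 = π.getD (1 + a + (t + 1)) 0 := by
      have : a + 1 + (t + 1) = 1 + a + (t + 1) := by omega
      rw [this]
    omega
  have hτNC : ¬ Crossing τ := by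
    intro hcr
    exact hNC (by rw [← henc]; exact crossing_encode_right σ hτpos hcr)
  exact ⟨σ, τ, ⟨rfl, hσRGS, hσNC⟩, ⟨rfl, hτRGS, hτNC⟩, by omega, henc⟩



lemma encode_sigma_len_le {σ τ σ' τ' : List ℕ} (hσ : IsRGS σ) (hτ' : IsRGS τ')
    (h : encode σ τ = encode σ' τ') : σ.length ≤ σ'.length := by
  by_contra hc
  push_neg at hc
  have hl : σ.length + τ.length = σ'.length + τ'.length := by
    have := congrArg List.length h
    rw [encode_length, encode_length] at this
    omega
  have hτ'len : 1 ≤ τ'.length := by omega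
  have hv1 : (encode σ τ).getD (σ'.length + 1) 0 = σ.getD σ'.length 0 + 1 :=
    encode_getD_sigma σ τ hc
  have hv2 : (encode σ' τ').getD (σ'.length + 1 + 0) 0 = emap (mx σ') (τ'.getD 0 0) :=
    encode_getD_tau σ' τ' (by omega)
  have h1 : τ'.getD 0 0 = 1 := rgs_head hτ' (by omega)
  rw [Nat.add_zero] at hv2
  rw [h, hv2, h1, emap_one] at hv1
  have := rgs_pos hσ (i := σ'.length) hc
  omega

lemma encode_inj {σ τ σ' τ' : List ℕ} (hσ : IsRGS σ) (hτ : IsRGS τ)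
    (hσ' : IsRGS σ') (hτ' : IsRGS τ') (h : encode σ τ = encode σ' τ') :
    σ = σ' ∧ τ = τ' := by
  have hsl : σ.length = σ'.length :=
    le_antisymm (encode_sigma_len_le hσ hτ' h) (encode_sigma_len_le hσ' hτ h.symm)
  have hl : σ.length + τ.length = σ'.length + τ'.length := by
    have := congrArg List.length h
    rw [encode_length, encode_length] at this
    omega
  have htl : τ.length = τ'.length := by omega
  have hσeq : σ = σ' := by
    apply ext_getD hsl
    intro t ht
    have h1 := encode_getD_sigma σ τ ht
    have h2 := encode_getD_sigma σ' τ' (hsl ▸ ht)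
    rw [h, h2] at h1
    omega
  subst hσeq
  refine ⟨rfl, ext_getD htl ?_⟩
  intro t ht
  have h1 := encode_getD_tau σ τ ht
  have h2 := encode_getD_tau σ τ' (htl ▸ ht)
  rw [h, h2] at h1
  have := (emap_inj (rgs_pos hτ' (htl ▸ ht)) (rgs_pos hτ ht)).1 h1
  omega


/-! ### ascents -/

lemma asc_not_before {π : List ℕ} (hR : IsRGS π) (hNC : ¬Crossing π) {i : ℕ}
    (h1 : i + 1 < π.length) (h2 : π.getD i 0 < π.getD (i + 1) 0) :
    ∀ p, p ≤ i → π.getD p 0 ≠ π.getD (i + 1) 0 := by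
  classical
  intro p hp hv
  have hex : ∃ q, π.getD q 0 = π.getD (i + 1) 0 ∧ q < π.length := ⟨p, hv, by omega⟩
  obtain ⟨hqv, hql⟩ := Nat.find_spec hex
  have hqmin : ∀ p', p' < Nat.find hex → π.getD p' 0 ≠ π.getD (i + 1) 0 := by
    intro p' hp' hc
    exact Nat.find_min hex hp' ⟨hc, by omega⟩
  have hqp : Nat.find hex ≤ p := by
    by_contra hc
    exact hqmin p (by omega) hv
  have hposi : 1 ≤ π.getD i 0 := rgs_pos hR (by omega)
  obtain ⟨hmx, hq1⟩ := rgs_first_occ_mx hR (v := π.getD (i + 1) 0) (by omega) hql hqv hqmin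
  obtain ⟨p', hp'1, hp'2, hp'3⟩ := rgs_occurs hR (k := Nat.find hex) (v := π.getD i 0)
    hposi (by omega)
  have hqi : Nat.find hex < i := by
    rcases lt_or_eq_of_le (show Nat.find hex ≤ i by omega) with h | h
    · exact h
    · rw [h] at hqv; omega
  exact hNC ⟨p', Nat.find hex, i, i + 1, by omega, hqi, by omega, h1,
    by rw [hp'3], by rw [hqv], by omega⟩

lemma asc_exists_first {π : List ℕ} (hR : IsRGS π) {v : ℕ} (h2 : 2 ≤ v) (h3 : v ≤ mx π) :
    ∃ q, q < π.length ∧ π.getD q 0 = v ∧ 1 ≤ q ∧ π.getD (q - 1) 0 < v ∧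
      ∀ p, p < q → π.getD p 0 ≠ v := by
  classical
  have h4 : v ≤ mx (π.take π.length) := by rwa [List.take_length]
  obtain ⟨j, hj1, hj2, hj3⟩ := rgs_occurs hR (by omega) h4
  have hex : ∃ q, π.getD q 0 = v ∧ q < π.length := ⟨j, hj3, hj2⟩
  obtain ⟨hqv, hql⟩ := Nat.find_spec hex
  have hqmin : ∀ p', p' < Nat.find hex → π.getD p' 0 ≠ v := by
    intro p' hp' hc
    exact Nat.find_min hex hp' ⟨hc, by omega⟩
  obtain ⟨hmx, hq1⟩ := rgs_first_occ_mx hR h2 hql hqv hqmin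
  have h5 : π.getD (Nat.find hex - 1) 0 ≤ mx (π.take (Nat.find hex)) :=
    rgs_getD_le_mx_take hR (by omega) (by omega)
  exact ⟨Nat.find hex, hql, hqv, hq1, by omega, hqmin⟩

lemma mx_le_length {π : List ℕ} (hR : IsRGS π) : mx π ≤ π.length := by
  have := rgs_mx_take_le hR π.length
  rwa [List.take_length] at this

lemma mx_pos {π : List ℕ} (hR : IsRGS π) (h : 0 < π.length) : 1 ≤ mx π := by
  have h1 := rgs_head hR h
  have := getD_le_mx (l := π) (i := 0) h
  omega


/-! ### counting types -/

abbrev NCt (n : ℕ) : Type := {l : List ℕ // NCseq n l}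

abbrev Asc (n : ℕ) : Type :=
  {p : List ℕ × ℕ // NCseq n p.1 ∧ p.2 + 1 < n ∧ p.1.getD p.2 0 < p.1.getD (p.2 + 1) 0}

abbrev Mk (n : ℕ) : Type := {p : List ℕ × ℕ // NCseq n p.1 ∧ 1 ≤ p.2 ∧ p.2 ≤ mx p.1}

abbrev Mk' (n : ℕ) : Type := {p : List ℕ × ℕ // NCseq n p.1 ∧ 1 ≤ p.2 ∧ p.2 ≤ max (mx p.1) 1}

lemma ncseq_ext {n : ℕ} {l l' : List ℕ} (h : NCseq n l) (h' : NCseq n l')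
    (hval : ∀ i, i < n → l.getD i 0 = l'.getD i 0) : l = l' := by
  apply ext_getD (by rw [h.1, h'.1])
  intro i hi
  rw [h.1] at hi
  exact hval i hi

instance instFiniteNCt (n : ℕ) : Finite (NCt n) := by
  apply Finite.of_injective
    (f := fun (l : NCt n) => fun (i : Fin n) =>
      (⟨l.1.getD i 0, by
        have h1 : l.1.getD i 0 ≤ mx l.1 := getD_le_mx (by rw [l.2.1]; exact i.2)
        have h2 := mx_le_length l.2.2.1
        rw [l.2.1] at h2
        omega⟩ : Fin (n + 1)))
  intro x y hxy
  apply Subtype.ext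
  apply ncseq_ext x.2 y.2
  intro i hi
  have := congrFun hxy ⟨i, hi⟩
  simpa [Fin.mk.injEq] using this

instance instFiniteAsc (n : ℕ) : Finite (Asc n) := by
  apply Finite.of_injective
    (f := fun (a : Asc n) => ((⟨a.1.1, a.2.1⟩ : NCt n), (⟨a.1.2, by
      have := a.2.2.1; omega⟩ : Fin (n + 1))))
  intro x y hxy
  simp only [Prod.mk.injEq, Subtype.mk.injEq, Fin.mk.injEq] at hxy
  exact Subtype.ext (Prod.ext hxy.1 hxy.2)

instance instFiniteMk (n : ℕ) : Finite (Mk n) := by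
  apply Finite.of_injective
    (f := fun (a : Mk n) => ((⟨a.1.1, a.2.1⟩ : NCt n), (⟨a.1.2, by
      have h1 := a.2.2.2
      have h2 := mx_le_length a.2.1.2.1
      have h3 := a.2.1.1
      omega⟩ : Fin (n + 2))))
  intro x y hxy
  simp only [Prod.mk.injEq, Subtype.mk.injEq, Fin.mk.injEq] at hxy
  exact Subtype.ext (Prod.ext hxy.1 hxy.2)

instance instFiniteMk' (n : ℕ) : Finite (Mk' n) := by
  apply Finite.of_injective
    (f := fun (a : Mk' n) => ((⟨a.1.1, a.2.1⟩ : NCt n), (⟨a.1.2, by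
      have h1 := a.2.2.2
      have h2 := mx_le_length a.2.1.2.1
      have h3 := a.2.1.1
      have : max (mx a.1.1) 1 ≤ max n 1 := by
        apply max_le_max _ (le_refl 1)
        omega
      omega⟩ : Fin (n + 2))))
  intro x y hxy
  simp only [Prod.mk.injEq, Subtype.mk.injEq, Fin.mk.injEq] at hxy
  exact Subtype.ext (Prod.ext hxy.1 hxy.2)

lemma natCard_sigma {k : ℕ} (f : Fin k → Type) [∀ i, Finite (f i)] :
    Nat.card (Σ i, f i) = ∑ i, Nat.card (f i) := by
  have := fun i => Fintype.ofFinite (f i)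
  simp only [Nat.card_eq_fintype_card]
  exact Fintype.card_sigma


lemma card_NCt_succ (n : ℕ) :
    Nat.card (NCt (n + 1)) =
      ∑ i ∈ Finset.range (n + 1), Nat.card (NCt i) * Nat.card (NCt (n - i)) := by
  classical
  have hbij : Function.Bijective
      (fun (x : Σ i : Fin (n + 1), NCt i × NCt (n - i)) =>
        (⟨encode x.2.1.1 x.2.2.1, by
          obtain ⟨i, ⟨σ, hσ⟩, ⟨τ, hτ⟩⟩ := x
          have h := ncseq_encode hσ hτ
          have he : (i : ℕ) + (n - (i : ℕ)) + 1 = n + 1 := by have := i.2; omega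
          rwa [he] at h⟩ : NCt (n + 1))) := by
    constructor
    · rintro ⟨⟨i, hi⟩, ⟨σ, hσ⟩, ⟨τ, hτ⟩⟩ ⟨⟨j, hj⟩, ⟨σ', hσ'⟩, ⟨τ', hτ'⟩⟩ h
      simp only [Subtype.mk.injEq] at h
      obtain ⟨h1, h2⟩ := encode_inj hσ.2.1 hτ.2.1 hσ'.2.1 hτ'.2.1 h
      subst h1
      subst h2
      have : i = j := by have a := hσ.1; have b := hσ'.1; simp only [Fin.val_mk] at a b; omega
      subst this
      rfl
    · rintro ⟨π, hπ⟩
      obtain ⟨σ, τ, hσ, hτ, hsum, henc⟩ := exists_encode hπ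
      refine ⟨⟨⟨σ.length, by omega⟩, ⟨σ, hσ⟩, ⟨τ, ?_⟩⟩, ?_⟩
      · have h2 : τ.length = n - σ.length := by omega
        have := hτ
        rwa [h2] at this
      · exact Subtype.ext henc
  calc Nat.card (NCt (n + 1))
      = Nat.card (Σ i : Fin (n + 1), NCt i × NCt (n - i)) :=
        (Nat.card_eq_of_bijective _ hbij).symm
    _ = ∑ i : Fin (n + 1), Nat.card (NCt (i : ℕ) × NCt (n - (i : ℕ))) := natCard_sigma _
    _ = ∑ i : Fin (n + 1), Nat.card (NCt (i : ℕ)) * Nat.card (NCt (n - (i : ℕ))) := by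
        simp [Nat.card_prod]
    _ = ∑ i ∈ Finset.range (n + 1), Nat.card (NCt i) * Nat.card (NCt (n - i)) :=
        Fin.sum_univ_eq_sum_range (fun i => Nat.card (NCt i) * Nat.card (NCt (n - i))) (n + 1)


lemma card_Mk_succ (n : ℕ) :
    Nat.card (Mk (n + 1)) =
      ∑ i ∈ Finset.range (n + 1),
        (Nat.card (Mk i) * Nat.card (NCt (n - i)) +
          Nat.card (NCt i) * Nat.card (Mk' (n - i))) := by
  classical
  have hbij : Function.Bijective
      (fun (x : Σ i : Fin (n + 1), (Mk i × NCt (n - i)) ⊕ (NCt i × Mk' (n - i))) =>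
        (Sum.elim
          (fun y : Mk (x.1 : ℕ) × NCt (n - (x.1 : ℕ)) =>
            (⟨(encode y.1.1.1 y.2.1, y.1.1.2), by
              refine ⟨?_, y.1.2.2.1, ?_⟩
              · have h := ncseq_encode y.1.2.1 y.2.2
                have he : ((x.1 : ℕ)) + (n - (x.1 : ℕ)) + 1 = n + 1 := by
                  have := x.1.2; omega
                rwa [he] at h
              · rw [mx_encode _ _ y.2.2.2.1.2.1]
                have := y.1.2.2.2
                omega⟩ : Mk (n + 1)))
          (fun y : NCt (x.1 : ℕ) × Mk' (n - (x.1 : ℕ)) =>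
            (⟨(encode y.1.1 y.2.1.1, mx y.1.1 + y.2.1.2), by
              refine ⟨?_, by have := y.2.2.2.1; omega, ?_⟩
              · have h := ncseq_encode y.1.2 y.2.2.1
                have he : ((x.1 : ℕ)) + (n - (x.1 : ℕ)) + 1 = n + 1 := by
                  have := x.1.2; omega
                rwa [he] at h
              · rw [mx_encode _ _ y.2.2.1.2.1.2.1]
                have := y.2.2.2.2
                omega⟩ : Mk (n + 1)))
          x.2)) := by
    constructor
    · rintro ⟨⟨i, hi⟩, x⟩ ⟨⟨j, hj⟩, y⟩ h
      rcases x with ⟨⟨⟨σ, v⟩, hσ⟩, ⟨τ, hτ⟩⟩ | ⟨⟨σ, hσ⟩, ⟨⟨τ, w⟩, hτ⟩⟩ <;>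
        rcases y with ⟨⟨⟨σ', v'⟩, hσ'⟩, ⟨τ', hτ'⟩⟩ | ⟨⟨σ', hσ'⟩, ⟨⟨τ', w'⟩, hτ'⟩⟩ <;>
          simp only [Sum.elim_inl, Sum.elim_inr, Subtype.mk.injEq, Prod.mk.injEq] at h
      · -- inl inl
        obtain ⟨h1, h2⟩ := encode_inj hσ.1.2.1 hτ.2.1 hσ'.1.2.1 hτ'.2.1 h.1
        subst h1; subst h2
        have : i = j := by
          have a : σ.length = i := hσ.1.1
          have b : σ.length = j := hσ'.1.1
          omega
        subst this
        have : v = v' := h.2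
        subst this
        rfl
      · -- inl inr : v ≤ mx σ but v = mx σ' + w', σ = σ'
        obtain ⟨h1, h2⟩ := encode_inj hσ.1.2.1 hτ.2.1 hσ'.2.1 hτ'.1.2.1 h.1
        subst h1; subst h2
        exfalso
        have b1 : v ≤ mx σ := hσ.2.2
        have b2 : 1 ≤ w' := hτ'.2.1
        have b3 : v = mx σ + w' := h.2
        omega
      · -- inr inl
        obtain ⟨h1, h2⟩ := encode_inj hσ.2.1 hτ.1.2.1 hσ'.1.2.1 hτ'.2.1 h.1
        subst h1; subst h2
        exfalso
        have b1 : v' ≤ mx σ := hσ'.2.2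
        have b2 : 1 ≤ w := hτ.2.1
        have b3 : mx σ + w = v' := h.2
        omega
      · -- inr inr
        obtain ⟨h1, h2⟩ := encode_inj hσ.2.1 hτ.1.2.1 hσ'.2.1 hτ'.1.2.1 h.1
        subst h1; subst h2
        have : i = j := by
          have a : σ.length = i := hσ.1
          have b : σ.length = j := hσ'.1
          omega
        subst this
        have : w = w' := by
          have b3 : mx σ + w = mx σ + w' := h.2
          omega
        subst this
        rfl
    · rintro ⟨⟨π, v⟩, hπ, hv1, hv2⟩
      have hπ' : NCseq (n + 1) π := hπ
      have hv1' : 1 ≤ v := hv1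
      have hv2' : v ≤ mx π := hv2
      obtain ⟨σ, τ, hσ, hτ, hsum, henc⟩ := exists_encode hπ'
      have hmxπ : mx π = mx σ + max (mx τ) 1 := by
        rw [← henc]; exact mx_encode σ τ hτ.2.1.2.1
      have hτ' : NCseq (n - σ.length) τ := by
        have h2 : τ.length = n - σ.length := by omega
        have := hτ; rwa [h2] at this
      rcases le_or_gt v (mx σ) with hc | hc
      · exact ⟨⟨⟨σ.length, by omega⟩, Sum.inl ⟨⟨(σ, v), hσ, hv1', hc⟩, ⟨τ, hτ'⟩⟩⟩,
          Subtype.ext (Prod.ext henc rfl)⟩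
      · have hb1 : 1 ≤ v - mx σ := by omega
        have hb2 : v - mx σ ≤ max (mx τ) 1 := by omega
        refine ⟨⟨⟨σ.length, by omega⟩, Sum.inr ⟨⟨σ, hσ⟩, ⟨(τ, v - mx σ), hτ', hb1, hb2⟩⟩⟩,
          Subtype.ext (Prod.ext henc (by simp only [Sum.elim_inr]; omega))⟩
  calc Nat.card (Mk (n + 1))
      = Nat.card (Σ i : Fin (n + 1), (Mk i × NCt (n - i)) ⊕ (NCt i × Mk' (n - i))) :=
        (Nat.card_eq_of_bijective _ hbij).symm
    _ = ∑ i : Fin (n + 1), Nat.card ((Mk (i : ℕ) × NCt (n - (i : ℕ))) ⊕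
          (NCt (i : ℕ) × Mk' (n - (i : ℕ)))) := natCard_sigma _
    _ = ∑ i : Fin (n + 1), (Nat.card (Mk (i : ℕ)) * Nat.card (NCt (n - (i : ℕ))) +
          Nat.card (NCt (i : ℕ)) * Nat.card (Mk' (n - (i : ℕ)))) := by
        refine Finset.sum_congr rfl fun i _ => ?_
        rw [Nat.card_sum, Nat.card_prod, Nat.card_prod]
    _ = _ := Fin.sum_univ_eq_sum_range
          (fun i => Nat.card (Mk i) * Nat.card (NCt (n - i)) +
            Nat.card (NCt i) * Nat.card (Mk' (n - i))) (n + 1)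


lemma card_Asc_add (n : ℕ) (hn : 1 ≤ n) :
    Nat.card (Asc n) + Nat.card (NCt n) = Nat.card (Mk n) := by
  classical
  have hbij : Function.Bijective
      (fun (x : Asc n ⊕ NCt n) =>
        (Sum.elim
          (fun a : Asc n =>
            (⟨(a.1.1, a.1.1.getD (a.1.2 + 1) 0), by
              refine ⟨a.2.1, ?_, ?_⟩
              · show 1 ≤ a.1.1.getD (a.1.2 + 1) 0
                have h3 := a.2.2.2
                omega
              · show a.1.1.getD (a.1.2 + 1) 0 ≤ mx a.1.1
                exact getD_le_mx (by rw [a.2.1.1]; exact a.2.2.1)⟩ : Mk n))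
          (fun s : NCt n =>
            (⟨(s.1, 1), s.2, le_refl 1, by
              show 1 ≤ mx s.1
              exact mx_pos s.2.2.1 (by rw [s.2.1]; omega)⟩ : Mk n))
          x)) := by
    constructor
    · rintro (⟨⟨π, i⟩, h1, h2, h3⟩ | ⟨π, h1⟩) (⟨⟨π', i'⟩, h1', h2', h3'⟩ | ⟨π', h1'⟩) h <;>
        simp only [Sum.elim_inl, Sum.elim_inr, Subtype.mk.injEq, Prod.mk.injEq] at h
      · obtain ⟨hππ, hvv⟩ := h
        subst hππ
        have : i = i' := by
          by_contra hne
          rcases lt_or_gt_of_ne hne with hlt | hlt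
          · exact asc_not_before h1.2.1 h1.2.2 (by rw [h1.1]; exact h2')
              (by exact h3') (i + 1) (by omega) hvv
          · exact asc_not_before h1.2.1 h1.2.2 (by rw [h1.1]; exact h2)
              (by exact h3) (i' + 1) (by omega) hvv.symm
        subst this
        rfl
      · exfalso
        have h4 : 1 ≤ π.getD i 0 := rgs_pos h1.2.1 (by rw [h1.1]; omega)
        have h5 : π.getD (i + 1) 0 = 1 := h.2
        have h3a : π.getD i 0 < π.getD (i + 1) 0 := h3
        omega
      · exfalso
        have h4 : 1 ≤ π'.getD i' 0 := rgs_pos h1'.2.1 (by rw [h1'.1]; omega)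
        have h5 : π'.getD (i' + 1) 0 = 1 := h.2.symm
        have h3a : π'.getD i' 0 < π'.getD (i' + 1) 0 := h3'
        omega
      · exact congrArg Sum.inr (Subtype.ext h.1)
    · rintro ⟨⟨π, v⟩, hπ, hv1, hv2⟩
      have hπ' : NCseq n π := hπ
      have hv1' : 1 ≤ v := hv1
      have hv2' : v ≤ mx π := hv2
      by_cases hone : v = 1
      · subst hone
        exact ⟨Sum.inr ⟨π, hπ'⟩, rfl⟩
      · obtain ⟨q, hql, hqv, hq1, hqlt, _⟩ :=
          asc_exists_first hπ'.2.1 (v := v) (by omega) hv2'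
        have he : q - 1 + 1 = q := by omega
        refine ⟨Sum.inl ⟨(π, q - 1), hπ', by show q - 1 + 1 < n; rw [hπ'.1] at hql; omega,
          by show π.getD (q - 1) 0 < π.getD (q - 1 + 1) 0; rw [he]; omega⟩, ?_⟩
        simp only [Sum.elim_inl]
        exact Subtype.ext (Prod.ext rfl (by show π.getD (q - 1 + 1) 0 = v; rw [he, hqv]))
  have := Nat.card_eq_of_bijective _ hbij
  rwa [Nat.card_sum] at this

lemma isRGS_nil : IsRGS [] := ⟨rfl, by simp, by intro i h; simp at h⟩

lemma ncseq_zero_iff {l : List ℕ} : NCseq 0 l ↔ l = [] := by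
  constructor
  · intro h
    exact List.eq_nil_of_length_eq_zero h.1
  · rintro rfl
    exact ⟨rfl, isRGS_nil, by rintro ⟨i, j, k, m, _, _, _, hm, _⟩; simp at hm⟩

lemma card_NCt_zero : Nat.card (NCt 0) = 1 := by
  rw [Nat.card_eq_one_iff_unique]
  constructor
  · constructor
    intro a b
    apply Subtype.ext
    rw [ncseq_zero_iff.1 a.2, ncseq_zero_iff.1 b.2]
  · exact ⟨⟨[], ncseq_zero_iff.2 rfl⟩⟩

lemma card_Mk_zero : Nat.card (Mk 0) = 0 := by
  have : IsEmpty (Mk 0) := by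
    constructor
    rintro ⟨⟨l, v⟩, h1, h2, h3⟩
    have hl : l = [] := ncseq_zero_iff.1 h1
    have h2' : 1 ≤ v := h2
    have h3' : v ≤ mx l := h3
    rw [hl] at h3'
    simp [mx_nil] at h3'
    omega
  exact Nat.card_of_isEmpty

lemma card_Mk'_zero : Nat.card (Mk' 0) = 1 := by
  rw [Nat.card_eq_one_iff_unique]
  constructor
  · constructor
    rintro ⟨⟨l, v⟩, h1, h2, h3⟩ ⟨⟨l', v'⟩, h1', h2', h3'⟩
    have hl : l = [] := ncseq_zero_iff.1 h1
    have hl' : l' = [] := ncseq_zero_iff.1 h1'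
    have h2a : 1 ≤ v := h2
    have h3a : v ≤ max (mx l) 1 := h3
    have h2b : 1 ≤ v' := h2'
    have h3b : v' ≤ max (mx l') 1 := h3'
    rw [hl] at h3a
    rw [hl'] at h3b
    simp [mx_nil] at h3a h3b
    apply Subtype.ext
    show (l, v) = (l', v')
    rw [hl, hl']
    exact Prod.ext rfl (show v = v' by omega)
  · exact ⟨⟨([], 1), ncseq_zero_iff.2 rfl, le_refl 1, by simp [mx_nil]⟩⟩

lemma card_Mk'_eq {n : ℕ} (hn : 1 ≤ n) : Nat.card (Mk' n) = Nat.card (Mk n) := by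
  apply Nat.card_congr
  apply Equiv.subtypeEquivRight
  rintro ⟨l, v⟩
  have : NCseq n l → 1 ≤ mx l := fun h => mx_pos h.2.1 (by rw [h.1]; omega)
  constructor
  · rintro ⟨h1, h2, h3⟩
    have h4 := this h1
    have h3' : v ≤ max (mx l) 1 := h3
    exact ⟨h1, h2, by show v ≤ mx l; omega⟩
  · rintro ⟨h1, h2, h3⟩
    have h4 := this h1
    have h3' : v ≤ mx l := h3
    exact ⟨h1, h2, by show v ≤ max (mx l) 1; omega⟩


/-! ### arithmetic -/

lemma N_eq_catalan (n : ℕ) : Nat.card (NCt n) = catalan n := by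
  induction n using Nat.strong_induction_on with
  | _ n ih =>
    match n with
    | 0 => rw [card_NCt_zero, catalan_zero]
    | (m + 1) =>
        rw [card_NCt_succ m, catalan_succ m,
          ← Fin.sum_univ_eq_sum_range (fun i => Nat.card (NCt i) * Nat.card (NCt (m - i))) (m + 1)]
        apply Finset.sum_congr rfl
        intro i _
        rw [ih i (by omega), ih (m - i) (by omega)]

lemma two_mul_card_Mk (n : ℕ) :
    2 * Nat.card (Mk n) + (if n = 0 then 1 else 0) = Nat.centralBinom n := by
  induction n using Nat.strong_induction_on with
  | _ n ih =>
    match n with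
    | 0 => rw [card_Mk_zero, Nat.centralBinom_zero]; norm_num
    | (m + 1) =>
        have f2 : ∀ k, k ≤ m → 2 * Nat.card (Mk k) + (if k = 0 then 1 else 0) =
            Nat.centralBinom k := fun k hk => ih k (by omega)
        have f1 : ∀ k, k ≤ m → 2 * Nat.card (Mk' k) =
            Nat.centralBinom k + (if k = 0 then 1 else 0) := by
          intro k hk
          rcases Nat.eq_zero_or_pos k with rfl | hkpos
          · rw [card_Mk'_zero, Nat.centralBinom_zero]; norm_num
          · rw [card_Mk'_eq hkpos, if_neg (by omega)]
            have := ih k (by omega)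
            rw [if_neg (by omega)] at this
            omega
        rw [if_neg (by omega), Nat.add_zero]
        have hterm : ∀ i ∈ Finset.range (m + 1),
            2 * (Nat.card (Mk i) * Nat.card (NCt (m - i)) +
              Nat.card (NCt i) * Nat.card (Mk' (m - i))) + (if i = 0 then catalan m else 0) =
            (Nat.centralBinom i * catalan (m - i) + catalan i * Nat.centralBinom (m - i)) +
              (if i = m then catalan m else 0) := by
          intro i hi
          rw [Finset.mem_range] at hi
          have hi' : i ≤ m := by omega
          rw [N_eq_catalan, N_eq_catalan]
          have h2 := f2 i hi'
          have h1 := f1 (m - i) (by omega)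
          by_cases h0 : i = 0 <;> by_cases hm : i = m
          · -- i = 0 = m
            subst h0
            subst hm
            norm_num [card_Mk_zero, card_Mk'_zero, catalan_zero, Nat.centralBinom_zero]
          · -- i = 0 < m
            subst h0
            rw [if_pos rfl, if_neg hm, card_Mk_zero, Nat.centralBinom_zero]
            rw [if_neg (by omega)] at h1
            have hc0 : catalan 0 = 1 := catalan_zero
            rw [Nat.sub_zero] at h1 ⊢
            rw [hc0]
            nlinarith [h1]
          · -- i = m ≠ 0
            subst hm
            rw [if_neg h0, if_pos rfl, Nat.sub_self, card_Mk'_zero, Nat.centralBinom_zero,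
              catalan_zero]
            rw [if_neg h0] at h2
            nlinarith [h2]
          · rw [if_neg h0, if_neg hm]
            rw [if_neg h0] at h2
            rw [if_neg (by omega)] at h1
            nlinarith [h2, h1]
        have hsum : 2 * Nat.card (Mk (m + 1)) + catalan m =
            (∑ i ∈ Finset.range (m + 1), (Nat.centralBinom i * catalan (m - i) +
              catalan i * Nat.centralBinom (m - i))) + catalan m := by
          rw [card_Mk_succ m, Finset.mul_sum]
          have e1 : (∑ i ∈ Finset.range (m + 1), (if i = 0 then catalan m else 0)) =
              catalan m := by
            rw [Finset.sum_ite_eq' (Finset.range (m + 1)) 0 (fun _ => catalan m)]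
            simp
          have e2 : (∑ i ∈ Finset.range (m + 1), (if i = m then catalan m else 0)) =
              catalan m := by
            rw [Finset.sum_ite_eq' (Finset.range (m + 1)) m (fun _ => catalan m)]
            simp
          calc (∑ i ∈ Finset.range (m + 1), 2 * (Nat.card (Mk i) * Nat.card (NCt (m - i)) +
                  Nat.card (NCt i) * Nat.card (Mk' (m - i)))) + catalan m
              = ∑ i ∈ Finset.range (m + 1), (2 * (Nat.card (Mk i) * Nat.card (NCt (m - i)) +
                  Nat.card (NCt i) * Nat.card (Mk' (m - i))) + (if i = 0 then catalan m else 0)) := by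
                rw [Finset.sum_add_distrib, e1]
            _ = ∑ i ∈ Finset.range (m + 1),
                  ((Nat.centralBinom i * catalan (m - i) + catalan i * Nat.centralBinom (m - i)) +
                    (if i = m then catalan m else 0)) := Finset.sum_congr rfl hterm
            _ = (∑ i ∈ Finset.range (m + 1), (Nat.centralBinom i * catalan (m - i) +
                  catalan i * Nat.centralBinom (m - i))) + catalan m := by
                rw [Finset.sum_add_distrib, e2]
        have hfinal : (∑ i ∈ Finset.range (m + 1), (Nat.centralBinom i * catalan (m - i) +
            catalan i * Nat.centralBinom (m - i))) = Nat.centralBinom (m + 1) := by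
          have hCB : ∀ k : ℕ, Nat.centralBinom k = (k + 1) * catalan k := fun k =>
            (succ_mul_catalan_eq_centralBinom k).symm
          have hstep : ∀ i ∈ Finset.range (m + 1),
              Nat.centralBinom i * catalan (m - i) + catalan i * Nat.centralBinom (m - i) =
              (m + 2) * (catalan i * catalan (m - i)) := by
            intro i hi
            rw [Finset.mem_range] at hi
            rw [hCB i, hCB (m - i)]
            have e1 : i + 1 + (m - i + 1) = m + 2 := by omega
            calc (i + 1) * catalan i * catalan (m - i) +
                catalan i * ((m - i + 1) * catalan (m - i))
                = (i + 1 + (m - i + 1)) * (catalan i * catalan (m - i)) := by ring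
              _ = (m + 2) * (catalan i * catalan (m - i)) := by rw [e1]
          rw [Finset.sum_congr rfl hstep, ← Finset.mul_sum]
          have : (∑ i ∈ Finset.range (m + 1), catalan i * catalan (m - i)) = catalan (m + 1) := by
            rw [catalan_succ m,
              ← Fin.sum_univ_eq_sum_range (fun i => catalan i * catalan (m - i)) (m + 1)]
          rw [this]
          exact succ_mul_catalan_eq_centralBinom (m + 1)
        omega

lemma two_choose {r : ℕ} (hr : 1 ≤ r) :
    2 * Nat.choose (2 * r - 1) r = Nat.centralBinom r := by
  obtain ⟨s, rfl⟩ : ∃ s, r = s + 1 := ⟨r - 1, by omega⟩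
  have h1 : 2 * (s + 1) - 1 = 2 * s + 1 := by omega
  have h2 : Nat.centralBinom (s + 1) = (2 * s + 2).choose (s + 1) := by
    have h2a : Nat.centralBinom (s + 1) = (2 * (s + 1)).choose (s + 1) := rfl
    rw [h2a, show 2 * (s + 1) = 2 * s + 2 from by omega]
  have h3 : (2 * s + 2).choose (s + 1) = (2 * s + 1).choose s + (2 * s + 1).choose (s + 1) :=
    Nat.choose_succ_succ (2 * s + 1) s
  have h4 : (2 * s + 1).choose s = (2 * s + 1).choose (s + 1) := by
    have := Nat.choose_symm (n := 2 * s + 1) (k := s + 1) (by omega)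
    have he : 2 * s + 1 - (s + 1) = s := by omega
    rwa [he] at this
  rw [h1, h2, h3, h4]
  omega

lemma final_identity {r : ℕ} (hr : 1 ≤ r) :
    Nat.choose (2 * r - 1) r - catalan r = Nat.choose (2 * r - 1) (r + 1) := by
  have hA : r * catalan r = Nat.choose (2 * r) (r - 1) := by
    have h0 := Nat.choose_succ_right_eq (2 * r) (r - 1)
    have he : r - 1 + 1 = r := by omega
    rw [he] at h0
    -- h0 : (2r).choose r * r = (2r).choose (r-1) * (2r - (r-1))
    have he2 : 2 * r - (r - 1) = r + 1 := by omega
    rw [he2] at h0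
    have hcb : (2 * r).choose r = (r + 1) * catalan r := by
      have : Nat.centralBinom r = (2 * r).choose r := rfl
      rw [← succ_mul_catalan_eq_centralBinom r] at this
      omega
    rw [hcb] at h0
    have : (r + 1) * (r * catalan r) = (r + 1) * (2 * r).choose (r - 1) := by ring_nf; ring_nf at h0; omega
    exact Nat.eq_of_mul_eq_mul_left (by omega) this
  have hB : Nat.choose (2 * r) (r + 1) = Nat.choose (2 * r) (r - 1) := by
    have h := Nat.choose_symm (n := 2 * r) (k := r + 1) (by omega)
    have he : 2 * r - (r + 1) = r - 1 := by omega
    rw [he] at h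
    exact h.symm
  have hC : Nat.choose (2 * r) (r + 1) =
      Nat.choose (2 * r - 1) r + Nat.choose (2 * r - 1) (r + 1) := by
    have h1 : 2 * r = (2 * r - 1) + 1 := by omega
    rw [h1]
    exact Nat.choose_succ_succ (2 * r - 1) r
  have hD := two_choose hr
  have hcb2 : Nat.centralBinom r = (r + 1) * catalan r :=
    (succ_mul_catalan_eq_centralBinom r).symm
  have hE : (r + 1) * catalan r = r * catalan r + catalan r := by ring
  -- linear arithmetic over atoms
  have h2X : 2 * Nat.choose (2 * r - 1) r = r * catalan r + catalan r := by omega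
  omega

end NCP

/-- The total number of ascents over all non-crossing partitions of [r] equals
binom(2r−1, r) − C_r = binom(2r−1, r+1), for r ≥ 1. -/
theorem stmt7 (r : ℕ) (hr : 1 ≤ r) :
    Nat.card {p : List ℕ × ℕ //
        NCseq r p.1 ∧ p.2 + 1 < r ∧ p.1.getD p.2 0 < p.1.getD (p.2 + 1) 0} =
      Nat.choose (2 * r - 1) r - catalan r ∧
    Nat.choose (2 * r - 1) r - catalan r = Nat.choose (2 * r - 1) (r + 1) := by
  constructor
  · have hA := NCP.card_Asc_add r hr
    have hN := NCP.N_eq_catalan r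
    have hS := NCP.two_mul_card_Mk r
    rw [if_neg (by omega)] at hS
    have hX := NCP.two_choose hr
    show Nat.card (NCP.Asc r) = _
    omega
  · exact NCP.final_identity hr
end

section
/- For all n ≥ 0, the subword patterns 211 and 221 are equidistributed on non-crossing partitions of [n]: the number of members of NC_n with exactly k occurrences of 211 equals the number with exactly k occurrences of 221, for every k ≥ 0. -/
namespace NC8

/-! ### Runs -/

def ofRuns : List (ℕ × ℕ) → List ℕ
  | [] => []
  | (v, m) :: rs => List.replicate m v ++ ofRuns rs

def consRun (a : ℕ) : List (ℕ × ℕ) → List (ℕ × ℕ)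
  | [] => [(a, 1)]
  | (b, m) :: rs => if a = b then (a, m + 1) :: rs else (a, 1) :: (b, m) :: rs

def toRuns : List ℕ → List (ℕ × ℕ)
  | [] => []
  | a :: l => consRun a (toRuns l)

@[simp] lemma ofRuns_nil : ofRuns [] = [] := rfl
@[simp] lemma ofRuns_cons (v m rs) : ofRuns ((v, m) :: rs) = List.replicate m v ++ ofRuns rs := rfl
@[simp] lemma toRuns_nil : toRuns [] = [] := rfl
@[simp] lemma toRuns_cons (a l) : toRuns (a :: l) = consRun a (toRuns l) := rfl
@[simp] lemma consRun_nil (a) : consRun a [] = [(a, 1)] := rfl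
@[simp] lemma consRun_cons (a b m rs) :
    consRun a ((b, m) :: rs) = if a = b then (a, m + 1) :: rs else (a, 1) :: (b, m) :: rs := rfl

def WF (rs : List (ℕ × ℕ)) : Prop :=
  (∀ p ∈ rs, 1 ≤ p.2) ∧ List.Chain' (fun p q : ℕ × ℕ => p.1 ≠ q.1) rs

lemma ofRuns_toRuns (l : List ℕ) : ofRuns (toRuns l) = l := by
  induction l with
  | nil => rfl
  | cons a l ih =>
    rw [toRuns_cons]
    rcases h : toRuns l with _ | ⟨⟨b, m⟩, rs⟩ <;> rw [h] at ih
    · simp at ih; simp [ofRuns, ← ih]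
    · by_cases hab : a = b
      · subst hab
        rw [consRun_cons, if_pos rfl, ofRuns_cons, List.replicate_succ, List.cons_append]
        rw [ofRuns_cons] at ih
        rw [ih]
      · simp only [consRun_cons, if_neg hab, ofRuns_cons, List.replicate_succ,
          List.replicate_zero] at *
        simp [ih]

lemma toRuns_cons_shape (a : ℕ) (l : List ℕ) :
    ∃ m rs, toRuns (a :: l) = (a, m) :: rs ∧ 1 ≤ m := by
  rw [toRuns_cons]
  rcases toRuns l with _ | ⟨⟨b, m⟩, rs⟩
  · exact ⟨1, [], rfl, le_refl 1⟩
  · by_cases hab : a = b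
    · subst hab; exact ⟨m + 1, rs, by simp, Nat.le_add_left 1 m⟩
    · exact ⟨1, (b, m) :: rs, by simp [hab], le_refl 1⟩

lemma WF_toRuns (l : List ℕ) : WF (toRuns l) := by
  induction l with
  | nil => exact ⟨by simp, by simp [List.Chain']⟩
  | cons a l ih =>
    rw [toRuns_cons]
    rcases h : toRuns l with _ | ⟨⟨b, m⟩, rs⟩ <;> rw [h] at ih
    · exact ⟨by simp, by simp [List.Chain']⟩
    · obtain ⟨ih1, ih2⟩ := ih
      by_cases hab : a = b
      · subst hab
        rw [consRun_cons, if_pos rfl]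
        refine ⟨?_, ?_⟩
        · intro p hp
          rcases List.mem_cons.1 hp with rfl | hp
          · exact Nat.le_add_left 1 m
          · exact ih1 p (List.mem_cons_of_mem _ hp)
        · unfold List.Chain' at ih2 ⊢
          rw [List.isChain_cons] at ih2 ⊢
          exact ih2
      · rw [consRun_cons, if_neg hab]
        refine ⟨?_, ?_⟩
        · intro p hp
          rcases List.mem_cons.1 hp with rfl | hp
          · exact le_refl 1
          · exact ih1 p hp
        · unfold List.Chain'
          rw [List.isChain_cons_cons]
          exact ⟨hab, ih2⟩

lemma toRuns_replicate_append (v : ℕ) (t : List ℕ)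
    (ht : ∀ p, (toRuns t).head? = some p → p.1 ≠ v) :
    ∀ m, 1 ≤ m → toRuns (List.replicate m v ++ t) = (v, m) :: toRuns t := by
  intro m hm
  induction m with
  | zero => omega
  | succ m ih =>
    rcases Nat.eq_or_lt_of_le hm with h1 | h2
    · have hm0 : m = 0 := by omega
      subst hm0
      simp only [List.replicate_succ, List.replicate_zero, List.nil_append, List.cons_append,
        List.nil_append] at *
      rw [toRuns_cons]
      rcases h : toRuns t with _ | ⟨⟨b, k⟩, rs⟩
      · rfl
      · have hb : b ≠ v := ht (b, k) (by rw [h]; rfl)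
        rw [consRun_cons, if_neg (Ne.symm hb)]
    · have hm1 : 1 ≤ m := by omega
      have ihm := ih hm1
      rw [List.replicate_succ, List.cons_append, toRuns_cons, ihm, consRun_cons, if_pos rfl]

lemma WF_tail {p : ℕ × ℕ} {rs : List (ℕ × ℕ)} (h : WF (p :: rs)) : WF rs :=
  ⟨fun q hq => h.1 q (List.mem_cons_of_mem _ hq), (List.isChain_cons.1 h.2).2⟩

lemma toRuns_ofRuns {rs : List (ℕ × ℕ)} (h : WF rs) : toRuns (ofRuns rs) = rs := by
  induction rs with
  | nil => rfl
  | cons p rs ih =>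
    obtain ⟨v, m⟩ := p
    have ihr := ih (WF_tail h)
    have hm : 1 ≤ m := h.1 (v, m) (List.mem_cons_self)
    rw [ofRuns_cons, toRuns_replicate_append v (ofRuns rs) ?_ m hm, ihr]
    intro q hq
    rw [ihr] at hq
    rcases rs with _ | ⟨r, rs⟩
    · simp at hq
    · simp at hq
      subst hq
      exact fun hv => ((List.isChain_cons.1 h.2).1 _ rfl) hv.symm



/-! ### Chains -/

def chains : List (ℕ × ℕ) → List (List (ℕ × ℕ))
  | [] => []
  | p :: rs =>
    match chains rs with
    | (q :: c) :: cs => if q.1 < p.1 then (p :: q :: c) :: cs else [p] :: (q :: c) :: cs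
    | cs => [p] :: cs

@[simp] lemma chains_nil : chains [] = [] := rfl

lemma chains_cons (p rs) : chains (p :: rs) =
    match chains rs with
    | (q :: c) :: cs => if q.1 < p.1 then (p :: q :: c) :: cs else [p] :: (q :: c) :: cs
    | cs => [p] :: cs := rfl

lemma chains_cons_nil {rs : List (ℕ × ℕ)} (p) (h : chains rs = []) :
    chains (p :: rs) = [[p]] := by rw [chains_cons, h]

lemma chains_cons_nilhead {rs : List (ℕ × ℕ)} (p cs) (h : chains rs = [] :: cs) :
    chains (p :: rs) = [p] :: [] :: cs := by rw [chains_cons, h]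

lemma chains_cons_conshead {rs : List (ℕ × ℕ)} (p q c cs) (h : chains rs = (q :: c) :: cs) :
    chains (p :: rs) =
      if q.1 < p.1 then (p :: q :: c) :: cs else [p] :: (q :: c) :: cs := by
  rw [chains_cons, h]

lemma chains_cons_shape (x : ℕ × ℕ) (s : List (ℕ × ℕ)) :
    ∃ c cs, chains (x :: s) = (x :: c) :: cs := by
  rcases h : chains s with _ | ⟨_ | ⟨q, c⟩, cs⟩
  · exact ⟨[], [], chains_cons_nil x h⟩
  · exact ⟨[], _, chains_cons_nilhead x _ h⟩
  · by_cases hq : q.1 < x.1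
    · exact ⟨q :: c, cs, by rw [chains_cons_conshead x q c cs h, if_pos hq]⟩
    · exact ⟨[], _, by rw [chains_cons_conshead x q c cs h, if_neg hq]⟩

lemma flatten_chains (rs : List (ℕ × ℕ)) : (chains rs).flatten = rs := by
  induction rs with
  | nil => rfl
  | cons p rs ih =>
    rcases h : chains rs with _ | ⟨_ | ⟨q, c⟩, cs⟩ <;> rw [h] at ih
    · rw [chains_cons_nil p h]; simpa using ih
    · rw [chains_cons_nilhead p cs h]; simpa using ih
    · rw [chains_cons_conshead p q c cs h]
      by_cases hq : q.1 < p.1 <;> simp only [hq, if_true, if_false] <;> simpa using ih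

def SDec (c : List (ℕ × ℕ)) : Prop := List.Chain' (fun p q : ℕ × ℕ => q.1 < p.1) c

def Bnd (c d : List (ℕ × ℕ)) : Prop :=
  ∀ a b : ℕ × ℕ, c.getLast? = some a → d.head? = some b → ¬ b.1 < a.1

def Valid (cs : List (List (ℕ × ℕ))) : Prop :=
  (∀ c ∈ cs, c ≠ []) ∧ (∀ c ∈ cs, SDec c) ∧ List.Chain' Bnd cs

lemma chains_valid (rs : List (ℕ × ℕ)) : Valid (chains rs) := by
  induction rs with
  | nil => exact ⟨by simp, by simp, by simp [List.Chain']⟩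
  | cons p rs ih =>
    rcases h : chains rs with _ | ⟨_ | ⟨q, c⟩, cs⟩ <;> rw [h] at ih
    · rw [chains_cons_nil p h]
      exact ⟨by simp, by simp [SDec, List.Chain'], by simp [List.Chain']⟩
    · exact absurd rfl (ih.1 [] (List.mem_cons_self))
    · rw [chains_cons_conshead p q c cs h]
      obtain ⟨ih1, ih2, ih3⟩ := ih
      by_cases hq : q.1 < p.1
      · rw [if_pos hq]
        refine ⟨?_, ?_, ?_⟩
        · intro d hd
          rcases List.mem_cons.1 hd with rfl | hd
          · simp
          · exact ih1 d (List.mem_cons_of_mem _ hd)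
        · intro d hd
          rcases List.mem_cons.1 hd with rfl | hd
          · exact List.isChain_cons_cons.2 ⟨hq, ih2 _ (List.mem_cons_self)⟩
          · exact ih2 d (List.mem_cons_of_mem _ hd)
        · unfold List.Chain' at ih3 ⊢
          rw [List.isChain_cons] at ih3 ⊢
          refine ⟨?_, ih3.2⟩
          intro d hd a b ha hb
          refine ih3.1 d hd a b ?_ hb
          rwa [List.getLast?_cons_cons] at ha
      · rw [if_neg hq]
        refine ⟨?_, ?_, ?_⟩
        · intro d hd
          rcases List.mem_cons.1 hd with rfl | hd
          · simp
          · exact ih1 d hd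
        · intro d hd
          rcases List.mem_cons.1 hd with rfl | hd
          · simp [SDec, List.Chain']
          · exact ih2 d hd
        · unfold List.Chain'
          rw [List.isChain_cons_cons]
          refine ⟨?_, ih3⟩
          intro a b ha hb
          simp at ha hb
          subst ha; subst hb
          exact hq

lemma chains_chain_append (t : List (ℕ × ℕ)) :
    ∀ c : List (ℕ × ℕ), c ≠ [] → SDec c →
    (∀ a b, c.getLast? = some a → t.head? = some b → ¬ b.1 < a.1) →
    chains (c ++ t) = c :: chains t := by
  intro c
  induction c with
  | nil => intro h; exact absurd rfl h
  | cons p c ih =>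
    intro _ hsd hbnd
    rcases c with _ | ⟨q, c⟩
    · -- c = [p]
      rw [List.singleton_append]
      rcases t with _ | ⟨x, s⟩
      · rw [chains_cons_nil p chains_nil]; rfl
      · obtain ⟨c', cs', hcc⟩ := chains_cons_shape x s
        rw [chains_cons_conshead p x c' cs' hcc, if_neg (hbnd p x rfl rfl), hcc]
    · -- c = p :: q :: c
      have hq : q.1 < p.1 := (List.isChain_cons_cons.1 hsd).1
      have ihh := ih (by simp) (List.isChain_cons_cons.1 hsd).2 (by
        intro a b ha hb
        exact hbnd a b (by rwa [List.getLast?_cons_cons]) hb)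
      rw [List.cons_append] at ihh
      show chains (p :: (q :: (c ++ t))) = _
      rw [chains_cons_conshead p q _ _ ihh, if_pos hq]

lemma chains_flatten {cs : List (List (ℕ × ℕ))} (h : Valid cs) : chains cs.flatten = cs := by
  induction cs with
  | nil => rfl
  | cons c cs ih =>
    obtain ⟨h1, h2, h3⟩ := h
    have hvt : Valid cs := ⟨fun d hd => h1 d (List.mem_cons_of_mem _ hd),
      fun d hd => h2 d (List.mem_cons_of_mem _ hd), (List.isChain_cons.1 h3).2⟩
    rw [List.flatten_cons, chains_chain_append _ c (h1 c (List.mem_cons_self))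
      (h2 c (List.mem_cons_self)) ?_, ih hvt]
    intro a b ha hb
    rcases cs with _ | ⟨d, cs⟩
    · simp at hb
    · have hd : d ≠ [] := h1 d (by simp)
      rw [List.flatten_cons, List.head?_append_of_ne_nil _ hd] at hb
      exact (List.isChain_cons.1 h3).1 d rfl a b ha hb



/-! ### The flip map -/

def flipc (c : List (ℕ × ℕ)) : List (ℕ × ℕ) :=
  (c.map Prod.fst).zip ((c.map Prod.snd).reverse)

lemma zip_map_fst_snd : ∀ c : List (ℕ × ℕ), (c.map Prod.fst).zip (c.map Prod.snd) = c
  | [] => rfl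
  | p :: c => by simp [zip_map_fst_snd c]

@[simp] lemma map_fst_flipc (c : List (ℕ × ℕ)) : (flipc c).map Prod.fst = c.map Prod.fst := by
  apply List.map_fst_zip
  simp

@[simp] lemma map_snd_flipc (c : List (ℕ × ℕ)) :
    (flipc c).map Prod.snd = (c.map Prod.snd).reverse := by
  apply List.map_snd_zip
  simp

@[simp] lemma length_flipc (c : List (ℕ × ℕ)) : (flipc c).length = c.length := by
  simp [flipc]

lemma flipc_flipc (c : List (ℕ × ℕ)) : flipc (flipc c) = c := by
  show (List.map Prod.fst (flipc c)).zip (List.map Prod.snd (flipc c)).reverse = c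
  rw [map_fst_flipc, map_snd_flipc, List.reverse_reverse]
  exact zip_map_fst_snd c

lemma flipc_ne_nil {c : List (ℕ × ℕ)} (h : c ≠ []) : flipc c ≠ [] := by
  intro hc
  apply h
  have := congrArg List.length hc
  simp at this
  exact this

lemma sdec_iff_fst (c : List (ℕ × ℕ)) :
    SDec c ↔ List.Chain' (fun a b : ℕ => b < a) (c.map Prod.fst) := by
  unfold SDec List.Chain'
  rw [List.isChain_map]

lemma sdec_flipc {c : List (ℕ × ℕ)} (h : SDec c) : SDec (flipc c) := by
  rw [sdec_iff_fst, map_fst_flipc, ← sdec_iff_fst]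
  exact h

lemma bnd_flipc {c d : List (ℕ × ℕ)} (h : Bnd c d) : Bnd (flipc c) (flipc d) := by
  intro a b ha hb
  -- translate getLast?/head? through map fst
  have ha' : (c.map Prod.fst).getLast? = some a.1 := by
    rw [← map_fst_flipc, List.getLast?_map, ha]; rfl
  have hb' : (d.map Prod.fst).head? = some b.1 := by
    rw [← map_fst_flipc, List.head?_map, hb]; rfl
  rw [List.getLast?_map] at ha'
  rw [List.head?_map] at hb'
  rcases hc : c.getLast? with _ | a'
  · rw [hc] at ha'; simp at ha'
  rcases hd : d.head? with _ | b'
  · rw [hd] at hb'; simp at hb'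
  rw [hc] at ha'; rw [hd] at hb'
  simp at ha' hb'
  have := h a' b' hc hd
  omega

lemma valid_map_flipc {cs : List (List (ℕ × ℕ))} (h : Valid cs) : Valid (cs.map flipc) := by
  obtain ⟨h1, h2, h3⟩ := h
  refine ⟨?_, ?_, ?_⟩
  · intro c hc
    obtain ⟨d, hd, rfl⟩ := List.mem_map.1 hc
    exact flipc_ne_nil (h1 d hd)
  · intro c hc
    obtain ⟨d, hd, rfl⟩ := List.mem_map.1 hc
    exact sdec_flipc (h2 d hd)
  · unfold List.Chain' at h3 ⊢
    rw [List.isChain_map]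
    exact List.IsChain.imp (fun a b hab => bnd_flipc hab) h3


def flipruns (rs : List (ℕ × ℕ)) : List (ℕ × ℕ) := ((chains rs).map flipc).flatten

lemma flipruns_flipruns (rs : List (ℕ × ℕ)) : flipruns (flipruns rs) = rs := by
  have hv : Valid (chains rs) := chains_valid rs
  have hv2 : Valid ((chains rs).map flipc) := valid_map_flipc hv
  unfold flipruns
  rw [chains_flatten hv2, List.map_map]
  have : flipc ∘ flipc = id := funext flipc_flipc
  rw [this, List.map_id, flatten_chains]

lemma map_fst_flipruns (rs : List (ℕ × ℕ)) :
    (flipruns rs).map Prod.fst = rs.map Prod.fst := by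
  unfold flipruns
  rw [List.map_flatten, List.map_map]
  have : List.map Prod.fst ∘ flipc = List.map Prod.fst := funext map_fst_flipc
  rw [this, ← List.map_flatten, flatten_chains]

lemma mem_flipruns {p : ℕ × ℕ} {rs : List (ℕ × ℕ)} (h : p ∈ flipruns rs) :
    ∃ q ∈ rs, p.2 = q.2 := by
  unfold flipruns at h
  rw [List.mem_flatten] at h
  obtain ⟨c, hc, hp⟩ := h
  obtain ⟨d, hd, rfl⟩ := List.mem_map.1 hc
  have h2 : p.2 ∈ (flipc d).map Prod.snd := List.mem_map_of_mem hp
  rw [map_snd_flipc, List.mem_reverse] at h2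
  obtain ⟨q, hq, hq2⟩ := List.mem_map.1 h2
  refine ⟨q, ?_, hq2.symm⟩
  rw [← flatten_chains rs, List.mem_flatten]
  exact ⟨d, hd, hq⟩

lemma sum_snd_flipruns (rs : List (ℕ × ℕ)) :
    ((flipruns rs).map Prod.snd).sum = (rs.map Prod.snd).sum := by
  unfold flipruns
  rw [List.map_flatten, List.map_map, List.sum_flatten, List.map_map]
  have : (List.sum ∘ (List.map Prod.snd ∘ flipc)) = List.sum ∘ List.map Prod.snd := by
    funext c
    simp only [Function.comp_apply, map_snd_flipc, List.sum_reverse]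
  rw [this]
  conv_rhs => rw [← flatten_chains rs, List.map_flatten, List.sum_flatten, List.map_map]

lemma WF_flipruns {rs : List (ℕ × ℕ)} (h : WF rs) : WF (flipruns rs) := by
  constructor
  · intro p hp
    obtain ⟨q, hq, hpq⟩ := mem_flipruns hp
    rw [hpq]
    exact h.1 q hq
  · have := h.2
    have hiff : ∀ t : List (ℕ × ℕ), List.Chain' (fun p q : ℕ × ℕ => p.1 ≠ q.1) t ↔
        List.Chain' (fun a b : ℕ => a ≠ b) (t.map Prod.fst) := by
      intro t; unfold List.Chain'; rw [List.isChain_map]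
    rw [hiff, map_fst_flipruns, ← hiff]
    exact h.2

/-! ### Pattern counters on runs -/

def D211 : List (ℕ × ℕ) → ℕ
  | p :: q :: t => (if q.1 < p.1 ∧ 2 ≤ q.2 then 1 else 0) + D211 (q :: t)
  | _ => 0

def D221 : List (ℕ × ℕ) → ℕ
  | p :: q :: t => (if q.1 < p.1 ∧ 2 ≤ p.2 then 1 else 0) + D221 (q :: t)
  | _ => 0

@[simp] lemma D211_nil : D211 [] = 0 := rfl
@[simp] lemma D211_single (p) : D211 [p] = 0 := rfl
@[simp] lemma D211_cons_cons (p q t) :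
    D211 (p :: q :: t) = (if q.1 < p.1 ∧ 2 ≤ q.2 then 1 else 0) + D211 (q :: t) := rfl
@[simp] lemma D221_nil : D221 [] = 0 := rfl
@[simp] lemma D221_single (p) : D221 [p] = 0 := rfl
@[simp] lemma D221_cons_cons (p q t) :
    D221 (p :: q :: t) = (if q.1 < p.1 ∧ 2 ≤ p.2 then 1 else 0) + D221 (q :: t) := rfl

lemma D211_append (c t : List (ℕ × ℕ))
    (h : ∀ a b : ℕ × ℕ, c.getLast? = some a → t.head? = some b → ¬ b.1 < a.1) :
    D211 (c ++ t) = D211 c + D211 t := by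
  induction c with
  | nil => simp
  | cons p c ih =>
    rcases c with _ | ⟨q, c⟩
    · rcases t with _ | ⟨x, s⟩
      · simp
      · have hx : ¬ x.1 < p.1 := h p x rfl rfl
        simp [hx]
    · rw [List.cons_append, List.cons_append, D211_cons_cons, ← List.cons_append,
        ih (fun a b ha hb => h a b (by rw [List.getLast?_cons_cons]; exact ha) hb),
        D211_cons_cons]
      omega

lemma D221_append (c t : List (ℕ × ℕ))
    (h : ∀ a b : ℕ × ℕ, c.getLast? = some a → t.head? = some b → ¬ b.1 < a.1) :
    D221 (c ++ t) = D221 c + D221 t := by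
  induction c with
  | nil => simp
  | cons p c ih =>
    rcases c with _ | ⟨q, c⟩
    · rcases t with _ | ⟨x, s⟩
      · simp
      · have hx : ¬ x.1 < p.1 := h p x rfl rfl
        simp [hx]
    · rw [List.cons_append, List.cons_append, D221_cons_cons, ← List.cons_append,
        ih (fun a b ha hb => h a b (by rw [List.getLast?_cons_cons]; exact ha) hb),
        D221_cons_cons]
      omega

lemma D211_flatten {cs : List (List (ℕ × ℕ))} (h : Valid cs) :
    D211 cs.flatten = (cs.map D211).sum := by
  induction cs with
  | nil => simp
  | cons c cs ih =>
    obtain ⟨h1, h2, h3⟩ := h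
    have hvt : Valid cs := ⟨fun d hd => h1 d (List.mem_cons_of_mem _ hd),
      fun d hd => h2 d (List.mem_cons_of_mem _ hd), (List.isChain_cons.1 h3).2⟩
    rw [List.flatten_cons, D211_append c _ ?_, List.map_cons, List.sum_cons, ih hvt]
    intro a b ha hb
    rcases cs with _ | ⟨d, cs⟩
    · simp at hb
    · rw [List.flatten_cons, List.head?_append_of_ne_nil _ (h1 d (by simp))] at hb
      exact (List.isChain_cons.1 h3).1 d rfl a b ha hb

lemma D221_flatten {cs : List (List (ℕ × ℕ))} (h : Valid cs) :
    D221 cs.flatten = (cs.map D221).sum := by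
  induction cs with
  | nil => simp
  | cons c cs ih =>
    obtain ⟨h1, h2, h3⟩ := h
    have hvt : Valid cs := ⟨fun d hd => h1 d (List.mem_cons_of_mem _ hd),
      fun d hd => h2 d (List.mem_cons_of_mem _ hd), (List.isChain_cons.1 h3).2⟩
    rw [List.flatten_cons, D221_append c _ ?_, List.map_cons, List.sum_cons, ih hvt]
    intro a b ha hb
    rcases cs with _ | ⟨d, cs⟩
    · simp at hb
    · rw [List.flatten_cons, List.head?_append_of_ne_nil _ (h1 d (by simp))] at hb
      exact (List.isChain_cons.1 h3).1 d rfl a b ha hb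

lemma D211_sdec {c : List (ℕ × ℕ)} (h : SDec c) :
    D211 c = (c.map Prod.snd).tail.countP (fun m => 2 ≤ m) := by
  induction c with
  | nil => simp
  | cons p c ih =>
    rcases c with _ | ⟨q, c⟩
    · simp
    · have hq : q.1 < p.1 := (List.isChain_cons_cons.1 h).1
      rw [D211_cons_cons, ih (List.isChain_cons_cons.1 h).2]
      simp only [List.map_cons, List.tail_cons, List.countP_cons]
      simp only [hq, true_and, decide_eq_true_eq]
      by_cases h2 : 2 ≤ q.2 <;> simp [h2] <;> omega

lemma D221_sdec {c : List (ℕ × ℕ)} (h : SDec c) :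
    D221 c = (c.map Prod.snd).dropLast.countP (fun m => 2 ≤ m) := by
  induction c with
  | nil => simp
  | cons p c ih =>
    rcases c with _ | ⟨q, c⟩
    · simp
    · have hq : q.1 < p.1 := (List.isChain_cons_cons.1 h).1
      rw [D221_cons_cons, ih (List.isChain_cons_cons.1 h).2]
      have : (List.map Prod.snd (p :: q :: c)).dropLast
          = p.2 :: (List.map Prod.snd (q :: c)).dropLast := by
        simp [List.dropLast_cons_of_ne_nil]
      rw [this, List.countP_cons]
      simp only [hq, true_and, decide_eq_true_eq]
      by_cases h2 : 2 ≤ p.2 <;> simp [h2] <;> omega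

lemma tail_reverse {α : Type*} (l : List α) : l.reverse.tail = l.dropLast.reverse := by
  have h := List.dropLast_reverse (l := l.reverse)
  rw [List.reverse_reverse] at h
  rw [h, List.reverse_reverse]

lemma D221_flipc {c : List (ℕ × ℕ)} (h : SDec c) : D221 (flipc c) = D211 c := by
  rw [D221_sdec (sdec_flipc h), D211_sdec h, map_snd_flipc, List.dropLast_reverse,
    List.countP_reverse]

lemma D211_flipc {c : List (ℕ × ℕ)} (h : SDec c) : D211 (flipc c) = D221 c := by
  rw [D211_sdec (sdec_flipc h), D221_sdec h, map_snd_flipc, tail_reverse,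
    List.countP_reverse]

lemma D221_flipruns {rs : List (ℕ × ℕ)} : D221 (flipruns rs) = D211 rs := by
  have hv : Valid (chains rs) := chains_valid rs
  have hv2 : Valid ((chains rs).map flipc) := valid_map_flipc hv
  unfold flipruns
  rw [D221_flatten hv2, List.map_map]
  conv_rhs => rw [← flatten_chains rs, D211_flatten hv]
  congr 1
  apply List.map_congr_left
  intro c hc
  exact D221_flipc (hv.2.1 c hc)

/-! ### List-level pattern counters -/

lemma replicate_append_expand {α : Type*} (w : α) (x : List α) {k : ℕ} (hk : 1 ≤ k) :
    List.replicate k w ++ x = w :: (List.replicate (k - 1) w ++ x) := by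
  conv_lhs => rw [show k = (k - 1) + 1 by omega]
  rw [List.replicate_succ, List.cons_append]

lemma replicate_append_expand2 {α : Type*} (w : α) (x : List α) {k : ℕ} (hk : 2 ≤ k) :
    List.replicate k w ++ x = w :: w :: (List.replicate (k - 2) w ++ x) := by
  rw [replicate_append_expand w x (by omega : 1 ≤ k),
    replicate_append_expand w x (by omega : 1 ≤ k - 1),
    show k - 1 - 1 = k - 2 by omega]

def c211 : List ℕ → ℕ
  | a :: b :: c :: t => (if b < a ∧ b = c then 1 else 0) + c211 (b :: c :: t)
  | _ => 0

def c221 : List ℕ → ℕ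
  | a :: b :: c :: t => (if a = b ∧ c < b then 1 else 0) + c221 (b :: c :: t)
  | _ => 0

@[simp] lemma c211_nil : c211 [] = 0 := rfl
@[simp] lemma c211_single (a) : c211 [a] = 0 := rfl
@[simp] lemma c211_pair (a b) : c211 [a, b] = 0 := rfl
@[simp] lemma c211_cons3 (a b c t) :
    c211 (a :: b :: c :: t) = (if b < a ∧ b = c then 1 else 0) + c211 (b :: c :: t) := rfl
@[simp] lemma c221_nil : c221 [] = 0 := rfl
@[simp] lemma c221_single (a) : c221 [a] = 0 := rfl
@[simp] lemma c221_pair (a b) : c221 [a, b] = 0 := rfl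
@[simp] lemma c221_cons3 (a b c t) :
    c221 (a :: b :: c :: t) = (if a = b ∧ c < b then 1 else 0) + c221 (b :: c :: t) := rfl

lemma c211_cons_cons (v : ℕ) (s : List ℕ) : c211 (v :: v :: s) = c211 (v :: s) := by
  rcases s with _ | ⟨c, t⟩
  · rfl
  · rw [c211_cons3]
    simp

lemma c211_replicate_append (v : ℕ) (l : List ℕ) :
    ∀ m, 1 ≤ m → c211 (List.replicate m v ++ l) = c211 (v :: l) := by
  intro m hm
  induction m, hm using Nat.le_induction with
  | base => rfl
  | succ m hm ih =>
    rw [replicate_append_expand2 v l (by omega : 2 ≤ m + 1), show m + 1 - 2 = m - 1 by omega,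
      c211_cons_cons, ← replicate_append_expand v l hm, ih]

lemma c211_cons_ofRuns (v : ℕ) (rs : List (ℕ × ℕ)) (h : WF rs) :
    c211 (v :: ofRuns rs) =
      (match rs with
        | (v', m') :: _ => if v' < v ∧ 2 ≤ m' then 1 else 0
        | [] => 0) + c211 (ofRuns rs) := by
  rcases rs with _ | ⟨⟨v', m'⟩, rs'⟩
  · rfl
  · have hm' : 1 ≤ m' := h.1 (v', m') (List.mem_cons_self)
    rcases Nat.lt_or_ge m' 2 with h1 | h2
    · -- m' = 1
      have hm1 : m' = 1 := by omega
      subst hm1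
      simp only [ofRuns_cons, List.replicate_one, List.singleton_append]
      rcases hrs' : rs' with _ | ⟨⟨v'', m''⟩, rs''⟩
      · simp
      · have hm'' : 1 ≤ m'' := by
          apply h.1 (v'', m'')
          rw [hrs']
          exact List.mem_cons_of_mem _ (List.mem_cons_self)
        have hne : v' ≠ v'' := by
          have := (List.isChain_cons.1 h.2).1 (v'', m'') (by rw [hrs']; rfl)
          exact this
        rw [ofRuns_cons, replicate_append_expand v'' _ hm'', c211_cons3]
        have hcf : ¬ (v' < v ∧ v' = v'') := fun hc => hne hc.2
        rw [if_neg hcf, if_neg (by omega : ¬ (v' < v ∧ (2:ℕ) ≤ 1))]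
    · -- 2 ≤ m'
      rw [ofRuns_cons, replicate_append_expand2 v' _ h2, c211_cons3]
      by_cases hv : v' < v
      · simp [hv, h2]
      · simp [hv]

lemma c211_ofRuns {rs : List (ℕ × ℕ)} (h : WF rs) : c211 (ofRuns rs) = D211 rs := by
  induction rs with
  | nil => rfl
  | cons p rs ih =>
    obtain ⟨v, m⟩ := p
    have hm : 1 ≤ m := h.1 (v, m) (List.mem_cons_self)
    rw [ofRuns_cons, c211_replicate_append v _ m hm, c211_cons_ofRuns v rs (WF_tail h),
      ih (WF_tail h)]
    rcases rs with _ | ⟨⟨v', m'⟩, rs'⟩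
    · rfl
    · rw [D211_cons_cons]

lemma c221_cons_ne (v b : ℕ) (s : List ℕ) (h : v ≠ b) : c221 (v :: b :: s) = c221 (b :: s) := by
  rcases s with _ | ⟨c, t⟩
  · rfl
  · rw [c221_cons3]
    simp [h]

lemma c221_replicate_eq (v : ℕ) (s : List ℕ) {m : ℕ} (hm : 2 ≤ m) :
    c221 (List.replicate m v ++ s) = c221 (v :: v :: s) := by
  induction m, hm using Nat.le_induction with
  | base => rfl
  | succ m hm ih =>
    rw [replicate_append_expand2 v s (by omega : 2 ≤ m + 1), show m + 1 - 2 = m - 1 by omega]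
    have : List.replicate (m - 1) v ++ s = v :: (List.replicate (m - 2) v ++ s) := by
      rw [replicate_append_expand v s (by omega : 1 ≤ m - 1), show m - 1 - 1 = m - 2 by omega]
    rw [this, c221_cons3, if_neg (by omega : ¬ (v = v ∧ v < v)),
      ← replicate_append_expand2 v s hm, ih]
    omega

lemma c221_ofRuns {rs : List (ℕ × ℕ)} (h : WF rs) : c221 (ofRuns rs) = D221 rs := by
  induction rs with
  | nil => rfl
  | cons p rs ih =>
    obtain ⟨v, m⟩ := p
    have hm : 1 ≤ m := h.1 (v, m) (List.mem_cons_self)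
    have ihr := ih (WF_tail h)
    have hne : ∀ p : ℕ × ℕ, rs.head? = some p → p.1 ≠ v := by
      intro p hp
      rcases rs with _ | ⟨q, rs'⟩
      · simp at hp
      · simp at hp
        subst hp
        exact fun hv => ((List.isChain_cons.1 h.2).1 _ rfl) hv.symm
    rcases Nat.lt_or_ge m 2 with h1 | h2
    · -- m = 1
      have hm1 : m = 1 := by omega
      subst hm1
      rw [ofRuns_cons, List.replicate_one, List.singleton_append]
      rcases hrs : rs with _ | ⟨⟨v', m'⟩, rs'⟩
      · rfl
      · have hm' : 1 ≤ m' := h.1 (v', m') (by rw [hrs]; exact List.mem_cons_of_mem _ (List.mem_cons_self))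
        have hv' : v' ≠ v := hne (v', m') (by rw [hrs]; rfl)
        subst hrs
        rw [ofRuns_cons, replicate_append_expand v' _ hm', c221_cons_ne v v' _ (Ne.symm hv'),
          ← replicate_append_expand v' _ hm', ← ofRuns_cons, ihr, D221_cons_cons,
          if_neg (by omega : ¬ (v' < v ∧ (2:ℕ) ≤ 1))]
        omega
    · -- 2 ≤ m
      rw [ofRuns_cons, c221_replicate_eq v _ h2]
      rcases hrs : rs with _ | ⟨⟨v', m'⟩, rs'⟩
      · subst hrs
        simp [D221]
      · have hm' : 1 ≤ m' := h.1 (v', m') (by rw [hrs]; exact List.mem_cons_of_mem _ (List.mem_cons_self))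
        have hv' : v' ≠ v := hne (v', m') (by rw [hrs]; rfl)
        subst hrs
        rw [ofRuns_cons, replicate_append_expand v' _ hm', c221_cons3,
          c221_cons_ne v v' _ (Ne.symm hv'), ← replicate_append_expand v' _ hm',
          ← ofRuns_cons, ihr, D221_cons_cons]
        by_cases hlt : v' < v
        · simp [hlt, h2]
        · simp [hlt]

/-! ### RGS transfer -/

def RGSa : ℕ → List ℕ → Prop
  | _, [] => True
  | m, a :: l => 1 ≤ a ∧ a ≤ m + 1 ∧ RGSa (max m a) l

@[simp] lemma RGSa_nil (m) : RGSa m [] := trivial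
@[simp] lemma RGSa_cons (m a l) :
    RGSa m (a :: l) ↔ 1 ≤ a ∧ a ≤ m + 1 ∧ RGSa (max m a) l := Iff.rfl

lemma foldr_max_max (a m : ℕ) (t : List ℕ) :
    t.foldr max (max m a) = max a (t.foldr max m) := by
  induction t with
  | nil => simp [Nat.max_comm]
  | cons x t ih => simp [ih]; omega

lemma RGSa_iff (l : List ℕ) : ∀ m, RGSa m l ↔
    ((∀ x ∈ l, 1 ≤ x) ∧ ∀ i, i < l.length → l.getD i 0 ≤ (l.take i).foldr max m + 1) := by
  induction l with
  | nil => simp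
  | cons a l ih =>
    intro m
    simp only [RGSa_cons, ih (max m a)]
    constructor
    · rintro ⟨h1, h2, h3, h4⟩
      refine ⟨?_, ?_⟩
      · intro x hx
        rcases List.mem_cons.1 hx with rfl | hx
        · exact h1
        · exact h3 x hx
      · intro i hi
        rcases i with _ | j
        · simpa using h2
        · simp only [List.getD_cons_succ, List.take_succ_cons, List.foldr_cons]
          have := h4 j (by simpa using hi)
          rw [foldr_max_max] at this
          omega
    · rintro ⟨h1, h2⟩
      refine ⟨h1 a (List.mem_cons_self), by simpa using h2 0 (by simp), ?_, ?_⟩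
      · intro x hx; exact h1 x (List.mem_cons_of_mem _ hx)
      · intro i hi
        have := h2 (i + 1) (by simpa using hi)
        simp only [List.getD_cons_succ, List.take_succ_cons, List.foldr_cons] at this
        rw [foldr_max_max]
        omega

lemma isRGS_iff_RGSa (l : List ℕ) : IsRGS l ↔ RGSa 0 l := by
  rw [RGSa_iff]
  unfold IsRGS
  rcases l with _ | ⟨a, t⟩
  · simp
  · constructor
    · rintro ⟨h1, h2, h3⟩
      refine ⟨h2, ?_⟩
      intro i hi
      rcases i with _ | j
      · simp only [List.getD_cons_zero] at h1 ⊢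
        simp [h1]
      · exact h3 j (by simpa using hi)
    · rintro ⟨h1, h2⟩
      have h0 : a ≤ 1 := by simpa using h2 0 (by simp)
      have ha : 1 ≤ a := h1 a (List.mem_cons_self)
      exact ⟨by simpa using le_antisymm h0 ha, h1, fun i hi => h2 (i + 1) (by simpa using hi)⟩

lemma RGSa_replicate_append (v : ℕ) (l : List ℕ) {k : ℕ} (hk : 1 ≤ k) :
    ∀ m, RGSa m (List.replicate k v ++ l) ↔ (1 ≤ v ∧ v ≤ m + 1 ∧ RGSa (max m v) l) := by
  induction k, hk using Nat.le_induction with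
  | base => intro m; simp [RGSa_cons]
  | succ k hk ih =>
    intro m
    rw [List.replicate_succ, List.cons_append, RGSa_cons, ih (max m v)]
    constructor
    · rintro ⟨h1, h2, _, _, h5⟩
      exact ⟨h1, h2, by simpa using h5⟩
    · rintro ⟨h1, h2, h3⟩
      exact ⟨h1, h2, h1, by omega, by simpa using h3⟩

lemma RGSa_ofRuns_congr {rs rs' : List (ℕ × ℕ)}
    (hfst : rs.map Prod.fst = rs'.map Prod.fst)
    (h1 : ∀ p ∈ rs, 1 ≤ p.2) (h1' : ∀ p ∈ rs', 1 ≤ p.2) :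
    ∀ m, RGSa m (ofRuns rs) ↔ RGSa m (ofRuns rs') := by
  induction rs generalizing rs' with
  | nil =>
    rcases rs' with _ | _
    · intro m; rfl
    · simp at hfst
  | cons p rs ih =>
    rcases rs' with _ | ⟨q, rs'⟩
    · simp at hfst
    · simp only [List.map_cons, List.cons.injEq] at hfst
      intro m
      obtain ⟨v, mm⟩ := p
      obtain ⟨w, mm'⟩ := q
      simp only at hfst
      obtain ⟨rfl, hfst2⟩ : v = w ∧ _ := ⟨hfst.1, hfst.2⟩
      rw [ofRuns_cons, ofRuns_cons,
        RGSa_replicate_append v _ (h1 (v, mm) (List.mem_cons_self)),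
        RGSa_replicate_append v _ (h1' (v, mm') (List.mem_cons_self)),
        ih hfst2 (fun p hp => h1 p (List.mem_cons_of_mem _ hp))
          (fun p hp => h1' p (List.mem_cons_of_mem _ hp))]

/-! ### Crossing transfer -/

lemma sublist_of_indices {l : List ℕ} {i j k m : ℕ}
    (hij : i < j) (hjk : j < k) (hkm : k < m) (hm : m < l.length) :
    [l.getD i 0, l.getD j 0, l.getD k 0, l.getD m 0].Sublist l := by
  have hi : i < l.length := by omega
  have hj : j < l.length := by omega
  have hk : k < l.length := by omega
  have : [l.getD i 0, l.getD j 0, l.getD k 0, l.getD m 0]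
      = List.map l.get [⟨i, hi⟩, ⟨j, hj⟩, ⟨k, hk⟩, ⟨m, hm⟩] := by
    simp [List.getD_eq_getElem, hi, hj, hk, hm, List.get_eq_getElem]
  rw [this]
  apply List.map_getElem_sublist
  simp [List.pairwise_cons]
  omega

lemma crossing_iff_sublist (l : List ℕ) :
    Crossing l ↔ ∃ a b, a < b ∧ [a, b, a, b].Sublist l := by
  constructor
  · rintro ⟨i, j, k, m, hij, hjk, hkm, hm, hik, hjm, hlt⟩
    refine ⟨l.getD i 0, l.getD j 0, hlt, ?_⟩
    have := sublist_of_indices hij hjk hkm hm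
    rwa [← hik, ← hjm] at this
  · rintro ⟨a, b, hab, hsub⟩
    obtain ⟨is, his, hpw⟩ := List.sublist_eq_map_getElem hsub
    rcases is with _ | ⟨i0, _ | ⟨i1, _ | ⟨i2, _ | ⟨i3, _ | _⟩⟩⟩⟩ <;> simp at his
    obtain ⟨h0, h1, h2, h3⟩ := his
    rw [List.pairwise_iff_forall_sublist] at hpw
    refine ⟨i0, i1, i2, i3, ?_, ?_, ?_, i3.isLt, ?_, ?_, ?_⟩
    · exact hpw (by simp : [i0, i1].Sublist _)
    · exact hpw (by simp : [i1, i2].Sublist _)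
    · exact hpw (by simp : [i2, i3].Sublist _)
    · rw [List.getD_eq_getElem l 0 i0.isLt, List.getD_eq_getElem l 0 i2.isLt, ← h0, ← h2]
    · rw [List.getD_eq_getElem l 0 i1.isLt, List.getD_eq_getElem l 0 i3.isLt, ← h1, ← h3]
    · rw [List.getD_eq_getElem l 0 i0.isLt, List.getD_eq_getElem l 0 i1.isLt, ← h0, ← h1]
      exact hab

lemma map_fst_sublist_ofRuns {rs : List (ℕ × ℕ)} (h : ∀ p ∈ rs, 1 ≤ p.2) :
    (rs.map Prod.fst).Sublist (ofRuns rs) := by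
  induction rs with
  | nil => simp
  | cons p rs ih =>
    obtain ⟨v, m⟩ := p
    rw [List.map_cons, ofRuns_cons,
      replicate_append_expand v _ (h (v, m) (List.mem_cons_self))]
    apply List.Sublist.cons₂
    exact (ih (fun q hq => h q (List.mem_cons_of_mem _ hq))).trans (List.sublist_append_right _ _)

lemma sublist_map_fst_of_chain :
    ∀ rs : List (ℕ × ℕ), ∀ p : List ℕ, List.Chain' (fun a b : ℕ => a ≠ b) p →
      p.Sublist (ofRuns rs) → p.Sublist (rs.map Prod.fst) := by
  intro rs
  induction rs with
  | nil =>
    intro p _ hsub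
    simp only [ofRuns_nil, List.sublist_nil] at hsub
    simp [hsub]
  | cons q rs ih =>
    rintro p hp hsub
    obtain ⟨v, m⟩ := q
    rw [ofRuns_cons, List.sublist_append_iff] at hsub
    obtain ⟨p1, p2, rfl, hp1, hp2⟩ := hsub
    obtain ⟨k, hkm, rfl⟩ := List.sublist_replicate_iff.1 hp1
    have hk1 : k ≤ 1 := by
      by_contra hk
      have : List.Chain' (fun a b : ℕ => a ≠ b) (List.replicate k v) :=
        (List.isChain_append.1 hp).1
      rw [show k = (k - 2) + 1 + 1 by omega, List.replicate_succ, List.replicate_succ] at this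
      exact (List.isChain_cons_cons.1 this).1 rfl
    interval_cases k
    · -- k = 0
      simp only [List.replicate_zero, List.nil_append] at hp ⊢
      exact (ih p2 hp hp2).trans (List.sublist_cons_self _ _)
    · -- k = 1
      simp only [List.replicate_one, List.singleton_append] at hp ⊢
      rw [List.map_cons]
      exact List.Sublist.cons₂ v (ih p2 (List.isChain_cons.1 hp).2 hp2)

/-! ### occCount machinery -/

lemma occAt_succ_iff (τ : List ℕ) (x : ℕ) (l : List ℕ) (i : ℕ) :
    occAt τ (x :: l) (i + 1) ↔ occAt τ l i := by
  unfold occAt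
  rw [List.drop_succ_cons]

lemma occAt_length {τ l : List ℕ} {i : ℕ} (hτ : τ ≠ []) (h : occAt τ l i) : i < l.length := by
  have hlen := h.1
  rw [List.length_take, List.length_drop] at hlen
  have : 1 ≤ τ.length := List.length_pos_iff.2 hτ
  omega

lemma finite_occAt (τ l : List ℕ) (hτ : τ ≠ []) : Finite {i // occAt τ l i} := by
  apply Finite.of_injective (fun x : {i // occAt τ l i} =>
    (⟨x.1, occAt_length hτ x.2⟩ : Fin l.length))
  intro a b hab
  simp only [Fin.mk.injEq] at hab
  exact Subtype.ext hab

lemma occCount_nil {τ : List ℕ} (hτ : τ ≠ []) : occCount τ [] = 0 := by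
  have : IsEmpty {i // occAt τ ([] : List ℕ) i} := by
    constructor
    rintro ⟨i, hi⟩
    have := occAt_length hτ hi
    simp at this
  exact Nat.card_eq_zero.2 (Or.inl this)

open Classical in
lemma occCount_cons (τ : List ℕ) (hτ : τ ≠ []) (x : ℕ) (l : List ℕ) :
    occCount τ (x :: l) = (if occAt τ (x :: l) 0 then 1 else 0) + occCount τ l := by
  have hfin : Finite {i // occAt τ l i} := finite_occAt τ l hτ
  by_cases h0 : occAt τ (x :: l) 0
  · rw [if_pos h0]
    have e : {i // occAt τ (x :: l) i} ≃ Option {i // occAt τ l i} :=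
      { toFun := fun x' => match x' with
          | ⟨0, _⟩ => none
          | ⟨i + 1, h⟩ => some ⟨i, (occAt_succ_iff τ x l i).1 h⟩
        invFun := fun o => match o with
          | none => ⟨0, h0⟩
          | some ⟨i, h⟩ => ⟨i + 1, (occAt_succ_iff τ x l i).2 h⟩
        left_inv := by rintro ⟨_ | i, h⟩ <;> rfl
        right_inv := by rintro (_ | ⟨i, h⟩) <;> rfl }
    unfold occCount
    rw [Nat.card_congr e]
    have : Fintype {i // occAt τ l i} := Fintype.ofFinite _
    rw [Nat.card_eq_fintype_card (α := Option _), Fintype.card_option, Nat.card_eq_fintype_card]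
    omega
  · rw [if_neg h0]
    have e : {i // occAt τ (x :: l) i} ≃ {i // occAt τ l i} :=
      { toFun := fun x' => match x' with
          | ⟨0, h⟩ => absurd h h0
          | ⟨i + 1, h⟩ => ⟨i, (occAt_succ_iff τ x l i).1 h⟩
        invFun := fun y => ⟨y.1 + 1, (occAt_succ_iff τ x l y.1).2 y.2⟩
        left_inv := fun x' => by rcases x' with ⟨_ | i, h⟩; exacts [absurd h h0, rfl]
        right_inv := by rintro ⟨i, h⟩; rfl }
    unfold occCount
    rw [Nat.card_congr e]
    omega

lemma occAt_zero_short {τ l : List ℕ} (h : l.length < τ.length) : ¬ occAt τ l 0 := by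
  intro hc
  have hlen := hc.1
  rw [List.length_take, List.length_drop] at hlen
  omega

lemma occAt211_zero (a b c : ℕ) (t : List ℕ) :
    occAt [2, 1, 1] (a :: b :: c :: t) 0 ↔ (b < a ∧ b = c) := by
  have hwin : ((a :: b :: c :: t).drop 0).take ([2,1,1] : List ℕ).length = [a, b, c] := rfl
  unfold occAt
  rw [hwin]
  constructor
  · rintro ⟨-, h⟩
    have h10 := (h 1 0 (by norm_num) (by norm_num)).1 (by norm_num)
    have h12 := h 1 2 (by norm_num) (by norm_num)
    have h21 := h 2 1 (by norm_num) (by norm_num)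
    simp [List.getD] at h10 h12 h21
    omega
  · rintro ⟨h1, h2⟩
    refine ⟨rfl, ?_⟩
    intro j k hj hk
    have hj' : j < 3 := hj
    have hk' : k < 3 := hk
    interval_cases j <;> interval_cases k <;> simp [List.getD] <;> omega

lemma occAt221_zero (a b c : ℕ) (t : List ℕ) :
    occAt [2, 2, 1] (a :: b :: c :: t) 0 ↔ (a = b ∧ c < b) := by
  have hwin : ((a :: b :: c :: t).drop 0).take ([2,2,1] : List ℕ).length = [a, b, c] := rfl
  unfold occAt
  rw [hwin]
  constructor
  · rintro ⟨-, h⟩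
    have h01 := h 0 1 (by norm_num) (by norm_num)
    have h10 := h 1 0 (by norm_num) (by norm_num)
    have h21 := (h 2 1 (by norm_num) (by norm_num)).1 (by norm_num)
    simp [List.getD] at h01 h10 h21
    omega
  · rintro ⟨h1, h2⟩
    refine ⟨rfl, ?_⟩
    intro j k hj hk
    have hj' : j < 3 := hj
    have hk' : k < 3 := hk
    interval_cases j <;> interval_cases k <;> simp [List.getD] <;> omega

lemma occCount211 (l : List ℕ) : occCount [2, 1, 1] l = c211 l := by
  induction l with
  | nil => rw [occCount_nil (by simp), c211_nil]
  | cons x l ih =>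
    rw [occCount_cons _ (by simp), ih]
    rcases l with _ | ⟨b, _ | ⟨c, t⟩⟩
    · rw [if_neg (occAt_zero_short (by simp))]; rfl
    · rw [if_neg (occAt_zero_short (by simp))]; rfl
    · rw [c211_cons3]
      simp only [occAt211_zero x b c t]

lemma occCount221 (l : List ℕ) : occCount [2, 2, 1] l = c221 l := by
  induction l with
  | nil => rw [occCount_nil (by simp), c221_nil]
  | cons x l ih =>
    rw [occCount_cons _ (by simp), ih]
    rcases l with _ | ⟨b, _ | ⟨c, t⟩⟩
    · rw [if_neg (occAt_zero_short (by simp))]; rfl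
    · rw [if_neg (occAt_zero_short (by simp))]; rfl
    · rw [c221_cons3]
      simp only [occAt221_zero x b c t]

/-! ### NCseq transfer and the involution -/

lemma crossing_ofRuns_iff {rs : List (ℕ × ℕ)} (h1 : ∀ p ∈ rs, 1 ≤ p.2) :
    Crossing (ofRuns rs) ↔ ∃ a b, a < b ∧ [a, b, a, b].Sublist (rs.map Prod.fst) := by
  rw [crossing_iff_sublist]
  constructor
  · rintro ⟨a, b, hab, hsub⟩
    refine ⟨a, b, hab, ?_⟩
    apply sublist_map_fst_of_chain rs _ _ hsub
    simp [List.Chain', List.isChain_cons_cons]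
    omega
  · rintro ⟨a, b, hab, hsub⟩
    exact ⟨a, b, hab, hsub.trans (map_fst_sublist_ofRuns h1)⟩

def phi (l : List ℕ) : List ℕ := ofRuns (flipruns (toRuns l))

lemma length_ofRuns (rs : List (ℕ × ℕ)) : (ofRuns rs).length = (rs.map Prod.snd).sum := by
  induction rs with
  | nil => rfl
  | cons p rs ih =>
    obtain ⟨v, m⟩ := p
    simp [ih]

lemma phi_phi (l : List ℕ) : phi (phi l) = l := by
  unfold phi
  rw [toRuns_ofRuns (WF_flipruns (WF_toRuns l)), flipruns_flipruns, ofRuns_toRuns]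

lemma length_phi (l : List ℕ) : (phi l).length = l.length := by
  unfold phi
  conv_rhs => rw [← ofRuns_toRuns l]
  rw [length_ofRuns, length_ofRuns, sum_snd_flipruns]

lemma ncseq_phi {n : ℕ} {l : List ℕ} (h : NCseq n l) : NCseq n (phi l) := by
  obtain ⟨hlen, hrgs, hcr⟩ := h
  refine ⟨by rw [length_phi]; exact hlen, ?_, ?_⟩
  · rw [isRGS_iff_RGSa] at hrgs ⊢
    unfold phi
    rw [RGSa_ofRuns_congr (map_fst_flipruns (toRuns l)) (WF_flipruns (WF_toRuns l)).1
      (WF_toRuns l).1 0, ofRuns_toRuns]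
    exact hrgs
  · unfold phi
    rw [crossing_ofRuns_iff (WF_flipruns (WF_toRuns l)).1, map_fst_flipruns,
      ← crossing_ofRuns_iff (WF_toRuns l).1, ofRuns_toRuns]
    exact hcr

lemma occ221_phi (l : List ℕ) : occCount [2, 2, 1] (phi l) = occCount [2, 1, 1] l := by
  rw [occCount221, occCount211]
  unfold phi
  rw [c221_ofRuns (WF_flipruns (WF_toRuns l)), D221_flipruns,
    ← c211_ofRuns (WF_toRuns l), ofRuns_toRuns]

lemma occ211_phi (l : List ℕ) : occCount [2, 1, 1] (phi l) = occCount [2, 2, 1] l := by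
  conv_rhs => rw [← phi_phi l]
  rw [occ221_phi (phi l)]

end NC8

open NC8 in
/-- The subwords 211 and 221 are equidistributed on NC_n. -/
theorem stmt8 (n k : ℕ) :
    Nat.card {l : List ℕ // NCseq n l ∧ occCount [2, 1, 1] l = k} =
      Nat.card {l : List ℕ // NCseq n l ∧ occCount [2, 2, 1] l = k} := by
  apply Nat.card_congr
  exact
    { toFun := fun x => ⟨phi x.1, ncseq_phi x.2.1, by rw [occ221_phi]; exact x.2.2⟩
      invFun := fun x => ⟨phi x.1, ncseq_phi x.2.1, by rw [occ211_phi]; exact x.2.2⟩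
      left_inv := fun x => Subtype.ext (phi_phi x.1)
      right_inv := fun x => Subtype.ext (phi_phi x.1) }
end
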